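/- A minimal-length sequence of ordered pairs of leaves that reduces a phylogenetic network N to a single-leaf network must be a cherry-picking sequence, and its length equals n + r - 1, where n is the number of leaves of N and r is its reticulation number. -/

import Mathlib

open scoped Classical

/-- A (representation of a) rooted phylogenetic network: vertices are natural
numbers, `E` is the edge set, `root` the root, `taxa` the set of taxa labelling
the leaves via `label`. -/
structure Network (X : Type) where
  V : Finset ℕ
  E : Finset (ℕ × ℕ)
  root : ℕ
  taxa : Finset X
  label : X → ℕ

namespace Network

variable {X : Type}

noncomputable def indeg (N : Network X) (v : ℕ) : ℕ :=
  (N.E.filter (fun e => e.2 = v)).card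

noncomputable def outdeg (N : Network X) (v : ℕ) : ℕ :=
  (N.E.filter (fun e => e.1 = v)).card

noncomputable def parents (N : Network X) (v : ℕ) : Finset ℕ :=
  (N.E.filter (fun e => e.2 = v)).image Prod.fst

noncomputable def children (N : Network X) (v : ℕ) : Finset ℕ :=
  (N.E.filter (fun e => e.1 = v)).image Prod.snd

/-- The parent of a vertex (meaningful when the vertex has a unique parent,
e.g. for leaves). -/
noncomputable def theParent (N : Network X) (v : ℕ) : ℕ :=
  (N.parents v).min.untopD 0

def IsLeafNode (N : Network X) (v : ℕ) : Prop := N.indeg v = 1 ∧ N.outdeg v = 0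

def IsTreeNode (N : Network X) (v : ℕ) : Prop := N.indeg v = 1 ∧ 2 ≤ N.outdeg v

def IsRetic (N : Network X) (v : ℕ) : Prop := 2 ≤ N.indeg v ∧ N.outdeg v = 1

/-- Well-formedness: a phylogenetic network has a single outdegree-1, indegree-0
root, leaves bijectively labelled by the taxa, all other nodes tree nodes or
reticulations, and it is acyclic. -/
def IsPhylo (N : Network X) : Prop :=
  N.root ∈ N.V ∧ N.indeg N.root = 0 ∧ N.outdeg N.root = 1 ∧
  (∀ e ∈ N.E, e.1 ∈ N.V ∧ e.2 ∈ N.V) ∧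
  Set.InjOn N.label ↑N.taxa ∧
  (∀ x ∈ N.taxa, N.label x ∈ N.V ∧ N.IsLeafNode (N.label x)) ∧
  (∀ v ∈ N.V, N.IsLeafNode v → ∃ x ∈ N.taxa, N.label x = v) ∧
  (∀ v ∈ N.V, v = N.root ∨ N.IsLeafNode v ∨ N.IsTreeNode v ∨ N.IsRetic v) ∧
  (∀ v : ℕ, ¬ Relation.TransGen (fun a b => (a, b) ∈ N.E) v v)

def SemiBinary (N : Network X) : Prop := ∀ v ∈ N.V, N.IsTreeNode v → N.outdeg v = 2

def IsBinary (N : Network X) : Prop :=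
  N.SemiBinary ∧ ∀ v ∈ N.V, N.IsRetic v → N.indeg v = 2

def StackFree (N : Network X) : Prop :=
  ∀ e ∈ N.E, ¬ (N.IsRetic e.1 ∧ N.IsRetic e.2)

def IsTreeChild (N : Network X) : Prop :=
  N.StackFree ∧
  ∀ v ∈ N.V, N.IsTreeNode v → ∃ c ∈ N.children v, N.IsTreeNode c ∨ N.IsLeafNode c

def IsTree (N : Network X) : Prop := ∀ v ∈ N.V, ¬ N.IsRetic v

/-- Number of reticulation edges minus number of reticulations. -/
noncomputable def reticulationNumber (N : Network X) : ℕ :=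
  (N.E.filter (fun e => N.IsRetic e.2)).card - (N.V.filter (fun v => N.IsRetic v)).card

/-- `(x, y)` is a cherry: two distinct leaves sharing a parent. -/
def IsCherry (N : Network X) (x y : X) : Prop :=
  x ∈ N.taxa ∧ y ∈ N.taxa ∧ x ≠ y ∧
  ∃ p : ℕ, (p, N.label x) ∈ N.E ∧ (p, N.label y) ∈ N.E

/-- `(x, y)` is a reticulated cherry: the parent of `x` is a reticulation, the
parent of `y` a tree node which is also a parent of the parent of `x`. -/
def IsRetCherry (N : Network X) (x y : X) : Prop :=
  x ∈ N.taxa ∧ y ∈ N.taxa ∧ x ≠ y ∧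
  ∃ px py : ℕ, (px, N.label x) ∈ N.E ∧ (py, N.label y) ∈ N.E ∧
    N.IsRetic px ∧ N.IsTreeNode py ∧ (py, px) ∈ N.E

def ReduciblePair (N : Network X) (x y : X) : Prop :=
  N.IsCherry x y ∨ N.IsRetCherry x y

noncomputable def delVert (N : Network X) (v : ℕ) : Network X :=
  { V := N.V.erase v,
    E := N.E.filter (fun e => e.1 ≠ v ∧ e.2 ≠ v),
    root := N.root, taxa := N.taxa, label := N.label }

noncomputable def delEdge (N : Network X) (e : ℕ × ℕ) : Network X :=
  { N with E := N.E.erase e }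

/-- Suppress a degree-2 (indegree-1, outdegree-1) vertex. -/
noncomputable def suppress (N : Network X) (v : ℕ) : Network X :=
  if N.indeg v = 1 ∧ N.outdeg v = 1 then
    { V := N.V.erase v,
      E := (N.E.filter (fun e => e.1 ≠ v ∧ e.2 ≠ v)) ∪ (N.parents v ×ˢ N.children v),
      root := N.root, taxa := N.taxa, label := N.label }
  else N

/-- Reduce an ordered pair `(x, y)`: in the cherry case delete the leaf `x` and
suppress its parent; in the reticulated-cherry case delete the reticulation edge
between the two parents and suppress the resulting degree-2 vertices; otherwise
do nothing. -/
noncomputable def reducePair (N : Network X) (c : X × X) : Network X :=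
  if N.IsCherry c.1 c.2 then
    suppress
      { V := N.V.erase (N.label c.1),
        E := N.E.filter (fun e => e.1 ≠ N.label c.1 ∧ e.2 ≠ N.label c.1),
        root := N.root, taxa := N.taxa.erase c.1, label := N.label }
      (N.theParent (N.label c.1))
  else if N.IsRetCherry c.1 c.2 then
    (((N.delEdge (N.theParent (N.label c.2), N.theParent (N.label c.1))).suppress
        (N.theParent (N.label c.2))).suppress (N.theParent (N.label c.1)))
  else N

/-- Successive reduction of a network by a sequence of ordered pairs. -/
noncomputable def reduceSeq (N : Network X) (S : List (X × X)) : Network X :=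
  S.foldl (fun M c => M.reducePair c) N

/-- A network consisting of a single leaf, its root, and the edge between them. -/
def IsSingleLeaf (N : Network X) : Prop :=
  ∃ x ∈ N.taxa, N.V = {N.root, N.label x} ∧ N.E = {(N.root, N.label x)} ∧
    N.root ≠ N.label x

/-- `S` reduces `N` to a single-leaf network. -/
def Reduces (S : List (X × X)) (N : Network X) : Prop :=
  (N.reduceSeq S).IsSingleLeaf

/-- A cherry-picking sequence: ordered pairs of distinct taxa such that each
second coordinate reappears later as a first coordinate, or is the second
coordinate of the last pair. -/
def IsCPS (S : List (X × X)) : Prop :=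
  (∀ p ∈ S, p.1 ≠ p.2) ∧
  ∀ (i : ℕ) (hi : i < S.length),
    ((S.get ⟨i, hi⟩).2 ∈ (S.drop (i + 1)).map Prod.fst) ∨
    (∃ q, S.getLast? = some q ∧ (S.get ⟨i, hi⟩).2 = q.2)

/-- A tree-child sequence: a CPS in which a leaf appearing as a first coordinate
never appears later as a second coordinate. -/
def IsTCS (S : List (X × X)) : Prop :=
  IsCPS S ∧
  ∀ (i j : ℕ) (hi : i < S.length) (hj : j < S.length),
    i < j → (S.get ⟨i, hi⟩).1 ≠ (S.get ⟨j, hj⟩).2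

def IsPartialCPS (S : List (X × X)) : Prop := ∃ T, IsCPS (S ++ T)

def IsPartialTCS (S : List (X × X)) : Prop := ∃ T, IsTCS (S ++ T)

/-- A minimal CPS for `N`: a CPS reducing `N` in which every pair changes the
network. -/
def IsMinimalCPS (S : List (X × X)) (N : Network X) : Prop :=
  IsCPS S ∧ Reduces S N ∧
  ∀ i < S.length, N.reduceSeq (S.take (i + 1)) ≠ N.reduceSeq (S.take i)

def IsMinimalTCS (S : List (X × X)) (N : Network X) : Prop :=
  IsTCS S ∧ Reduces S N ∧
  ∀ i < S.length, N.reduceSeq (S.take (i + 1)) ≠ N.reduceSeq (S.take i)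

/-- A cherry-picking network: a phylogenetic network reducible by some CPS. -/
def IsCPN (N : Network X) : Prop :=
  N.IsPhylo ∧ ∃ S, IsCPS S ∧ Reduces S N

/-- A directed path in `N`, given as its list of vertices. -/
def IsDipath (N : Network X) (l : List ℕ) : Prop :=
  l.Chain' (fun a b => (a, b) ∈ N.E)

def pathEdges (l : List ℕ) : List (ℕ × ℕ) := l.zip l.tail

/-- An embedding of `N'` into `N`: an injective node map and a map of edges to
edge-disjoint directed paths, respecting the node map and the leaf labels. -/
def IsEmbedding (N' N : Network X) (f : ℕ → ℕ) (g : ℕ × ℕ → List ℕ) : Prop :=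
  (∀ v ∈ N'.V, f v ∈ N.V) ∧
  Set.InjOn f ↑N'.V ∧
  (∀ x ∈ N'.taxa, f (N'.label x) = N.label x) ∧
  (∀ e ∈ N'.E, N.IsDipath (g e) ∧ (g e).head? = some (f e.1) ∧
    (g e).getLast? = some (f e.2)) ∧
  (∀ e ∈ N'.E, ∀ e' ∈ N'.E, e ≠ e' →
    ∀ p ∈ pathEdges (g e), p ∉ pathEdges (g e'))

/-- `N'` is a subnetwork of `N` if `N'` embeds into `N`. -/
def IsSubnetwork (N' N : Network X) : Prop :=
  ∃ f g, IsEmbedding N' N f g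

/-- Contract the edge `(u, v)`, identifying `v` with `u`. -/
noncomputable def contractEdge (N : Network X) (u v : ℕ) : Network X :=
  { V := N.V.erase v,
    E := (N.E.erase (u, v)).image
      (fun e => ((if e.1 = v then u else e.1), (if e.2 = v then u else e.2))),
    root := if N.root = v then u else N.root,
    taxa := N.taxa,
    label := fun x => if N.label x = v then u else N.label x }

def ContractStep (N M : Network X) : Prop :=
  ∃ u v : ℕ, (u, v) ∈ N.E ∧ M = N.contractEdge u v

/-- `N` is a refinement of `M` if `M` can be obtained from `N` by contracting
some edges. -/
def IsRefinement (N M : Network X) : Prop :=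
  Relation.ReflTransGen ContractStep N M

/-- `N` contains `M` if some refinement of `M` is a subnetwork of `N`. -/
def Contains (N M : Network X) : Prop :=
  ∃ M' : Network X, IsRefinement M' M ∧ IsSubnetwork M' N

/-- Isomorphism of labelled networks. -/
def Isomorphic (N N' : Network X) : Prop :=
  N.taxa = N'.taxa ∧
  ∃ f : ℕ → ℕ, Set.BijOn f ↑N.V ↑N'.V ∧
    (∀ u ∈ N.V, ∀ v ∈ N.V, ((u, v) ∈ N.E ↔ (f u, f v) ∈ N'.E)) ∧
    f N.root = N'.root ∧
    (∀ x ∈ N.taxa, f (N.label x) = N'.label x)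

end Network

open Network

namespace Network

variable {X : Type} {M : Network X}

lemma indeg_def (v : ℕ) : M.indeg v = (M.E.filter (fun e => e.2 = v)).card := rfl
lemma outdeg_def (v : ℕ) : M.outdeg v = (M.E.filter (fun e => e.1 = v)).card := rfl

lemma outdeg_zero_no_edge {v : ℕ} (h : M.outdeg v = 0) (w : ℕ) : (v, w) ∉ M.E := by
  intro hmem
  have h2 : (v,w) ∈ M.E.filter (fun e => e.1 = v) := Finset.mem_filter.2 ⟨hmem, rfl⟩
  rw [outdeg_def, Finset.card_eq_zero] at h
  rw [h] at h2; exact absurd h2 (Finset.notMem_empty _)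

lemma in_edges_eq {v p : ℕ} (h : M.indeg v = 1) (he : (p, v) ∈ M.E) :
    M.E.filter (fun e => e.2 = v) = {(p,v)} := by
  rw [indeg_def] at h
  obtain ⟨a, ha⟩ := Finset.card_eq_one.mp h
  have hp : (p,v) ∈ M.E.filter (fun e => e.2 = v) := Finset.mem_filter.2 ⟨he, rfl⟩
  rw [ha] at hp ⊢
  rw [Finset.mem_singleton] at hp
  rw [hp]

lemma out_edges_eq {v w : ℕ} (h : M.outdeg v = 1) (he : (v, w) ∈ M.E) :
    M.E.filter (fun e => e.1 = v) = {(v,w)} := by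
  rw [outdeg_def] at h
  obtain ⟨a, ha⟩ := Finset.card_eq_one.mp h
  have hp : (v,w) ∈ M.E.filter (fun e => e.1 = v) := Finset.mem_filter.2 ⟨he, rfl⟩
  rw [ha] at hp ⊢
  rw [Finset.mem_singleton] at hp
  rw [hp]

lemma mem_of_in_edges_eq {v p : ℕ} (h : M.E.filter (fun e => e.2 = v) = {(p,v)}) :
    (p, v) ∈ M.E := by
  have : (p,v) ∈ M.E.filter (fun e => e.2 = v) := by rw [h]; simp
  exact (Finset.mem_filter.mp this).1

lemma eq_of_in_edges {v p : ℕ} (h : M.E.filter (fun e => e.2 = v) = {(p,v)})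
    {e : ℕ × ℕ} (he : e ∈ M.E) (h2 : e.2 = v) : e = (p, v) := by
  have : e ∈ M.E.filter (fun e => e.2 = v) := Finset.mem_filter.2 ⟨he, h2⟩
  rw [h, Finset.mem_singleton] at this; exact this

lemma eq_of_out_edges {v w : ℕ} (h : M.E.filter (fun e => e.1 = v) = {(v,w)})
    {e : ℕ × ℕ} (he : e ∈ M.E) (h2 : e.1 = v) : e = (v, w) := by
  have : e ∈ M.E.filter (fun e => e.1 = v) := Finset.mem_filter.2 ⟨he, h2⟩
  rw [h, Finset.mem_singleton] at this; exact this

lemma theParent_spec {v p : ℕ} (h : M.E.filter (fun e => e.2 = v) = {(p,v)}) :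
    M.theParent v = p := by
  have hpar : M.parents v = {p} := by
    rw [parents, h, Finset.image_singleton]
  rw [theParent, hpar, Finset.min_singleton]
  rfl

lemma indeg_one_spec {v : ℕ} (h : M.indeg v = 1) :
    ∃ p, M.E.filter (fun e => e.2 = v) = {(p,v)} := by
  rw [indeg_def] at h
  obtain ⟨a, ha⟩ := Finset.card_eq_one.mp h
  have : a ∈ M.E.filter (fun e => e.2 = v) := by rw [ha]; simp
  have h2 := (Finset.mem_filter.mp this).2
  exact ⟨a.1, by rw [ha]; congr 1; rw [← h2]⟩

lemma out_edges_pair {p a b : ℕ} (h : M.outdeg p = 2) (ha : (p,a) ∈ M.E)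
    (hb : (p,b) ∈ M.E) (hab : a ≠ b) :
    M.E.filter (fun e => e.1 = p) = {(p,a),(p,b)} := by
  have hsub : ({(p,a),(p,b)} : Finset (ℕ × ℕ)) ⊆ M.E.filter (fun e => e.1 = p) := by
    intro e he
    simp only [Finset.mem_insert, Finset.mem_singleton] at he
    rcases he with rfl | rfl
    · exact Finset.mem_filter.2 ⟨ha, rfl⟩
    · exact Finset.mem_filter.2 ⟨hb, rfl⟩
  have hcard : ({(p,a),(p,b)} : Finset (ℕ × ℕ)).card = 2 := by
    rw [Finset.card_insert_of_notMem (by simp [hab]), Finset.card_singleton]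
  rw [outdeg_def] at h
  exact (Finset.eq_of_subset_of_card_le hsub (by omega)).symm

lemma in_edges_pair {v a : ℕ} (h : M.indeg v = 2) (ha : (a,v) ∈ M.E) :
    ∃ b, a ≠ b ∧ (b,v) ∈ M.E ∧ M.E.filter (fun e => e.2 = v) = {(a,v),(b,v)} := by
  rw [indeg_def] at h
  obtain ⟨e1, e2, hne, hE⟩ := Finset.card_eq_two.mp h
  have h1 : e1 ∈ M.E.filter (fun e => e.2 = v) := by rw [hE]; simp
  have h2 : e2 ∈ M.E.filter (fun e => e.2 = v) := by rw [hE]; simp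
  have he1 : e1 = (e1.1, v) := Prod.ext rfl (Finset.mem_filter.mp h1).2
  have he2 : e2 = (e2.1, v) := Prod.ext rfl (Finset.mem_filter.mp h2).2
  have hav : (a,v) ∈ M.E.filter (fun e => e.2 = v) := Finset.mem_filter.2 ⟨ha, rfl⟩
  rw [hE] at hav
  simp only [Finset.mem_insert, Finset.mem_singleton] at hav
  rcases hav with h' | h'
  · refine ⟨e2.1, ?_, ?_, ?_⟩
    · intro hc
      have h3 : e2 = (a, v) := Prod.ext hc.symm (Finset.mem_filter.mp h2).2
      exact hne (h'.symm.trans h3.symm)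
    · have := (Finset.mem_filter.mp h2).1; rwa [he2] at this
    · rw [hE, ← h', ← he2]
  · refine ⟨e1.1, ?_, ?_, ?_⟩
    · intro hc
      have h3 : e1 = (a, v) := Prod.ext hc.symm (Finset.mem_filter.mp h1).2
      exact hne (h3.trans h')
    · have := (Finset.mem_filter.mp h1).1; rwa [he1] at this
    · rw [hE, ← h', ← he1]
      exact Finset.pair_comm _ _

end Network

namespace Network

variable {X : Type} {M : Network X}

/-- Degrees after erasing one edge. -/
lemma delEdge_indeg (e₀ : ℕ × ℕ) (he : e₀ ∈ M.E) (z : ℕ) :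
    (M.delEdge e₀).indeg z = if e₀.2 = z then M.indeg z - 1 else M.indeg z := by
  rw [indeg_def, indeg_def]
  show ((M.E.erase e₀).filter (fun e => e.2 = z)).card = _
  rw [Finset.filter_erase]
  split_ifs with h
  · rw [Finset.card_erase_of_mem (Finset.mem_filter.2 ⟨he, h⟩)]
  · rw [Finset.erase_eq_of_notMem]
    intro hc
    exact h (Finset.mem_filter.mp hc).2

lemma delEdge_outdeg (e₀ : ℕ × ℕ) (he : e₀ ∈ M.E) (z : ℕ) :
    (M.delEdge e₀).outdeg z = if e₀.1 = z then M.outdeg z - 1 else M.outdeg z := by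
  rw [outdeg_def, outdeg_def]
  show ((M.E.erase e₀).filter (fun e => e.1 = z)).card = _
  rw [Finset.filter_erase]
  split_ifs with h
  · rw [Finset.card_erase_of_mem (Finset.mem_filter.2 ⟨he, h⟩)]
  · rw [Finset.erase_eq_of_notMem]
    intro hc
    exact h (Finset.mem_filter.mp hc).2

lemma suppress_of_not (v : ℕ) (h : ¬ (M.indeg v = 1 ∧ M.outdeg v = 1)) :
    M.suppress v = M := by
  rw [suppress, if_neg h]

/-- Full specification of `suppress` at a degree-(1,1) vertex. -/
lemma suppress_spec {v u w : ℕ}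
    (hin : M.E.filter (fun e => e.2 = v) = {(u,v)})
    (hout : M.E.filter (fun e => e.1 = v) = {(v,w)})
    (huv : u ≠ v) (hvw : v ≠ w) (huw : u ≠ w)
    (hnew : (u,w) ∉ M.E) :
    (M.suppress v).E = (M.E.filter (fun e => e.1 ≠ v ∧ e.2 ≠ v)) ∪ {(u,w)} ∧
    (M.suppress v).V = M.V.erase v ∧ (M.suppress v).root = M.root ∧
    (M.suppress v).taxa = M.taxa ∧ (M.suppress v).label = M.label ∧
    (∀ z, z ≠ v → (M.suppress v).indeg z = M.indeg z ∧
      (M.suppress v).outdeg z = M.outdeg z) := by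
  have hi : M.indeg v = 1 := by rw [indeg_def, hin, Finset.card_singleton]
  have ho : M.outdeg v = 1 := by rw [outdeg_def, hout, Finset.card_singleton]
  have hmemuv : (u, v) ∈ M.E := mem_of_in_edges_eq hin
  have hmemvw : (v, w) ∈ M.E := by
    have : (v,w) ∈ M.E.filter (fun e => e.1 = v) := by rw [hout]; simp
    exact (Finset.mem_filter.mp this).1
  have hpar : M.parents v = {u} := by rw [parents, hin, Finset.image_singleton]
  have hch : M.children v = {w} := by rw [children, hout, Finset.image_singleton]
  have hsup : M.suppress v =
      { V := M.V.erase v,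
        E := (M.E.filter (fun e => e.1 ≠ v ∧ e.2 ≠ v)) ∪ ({u} ×ˢ {w}),
        root := M.root, taxa := M.taxa, label := M.label } := by
    rw [suppress, if_pos ⟨hi, ho⟩, hpar, hch]
  have hprod : ({u} ×ˢ {w} : Finset (ℕ × ℕ)) = {(u,w)} := by
    ext e; simp [Finset.mem_product, Prod.ext_iff]
  have hE' : (M.suppress v).E = (M.E.filter (fun e => e.1 ≠ v ∧ e.2 ≠ v)) ∪ {(u,w)} := by
    rw [hsup]; rw [hprod]
  refine ⟨hE', by rw [hsup], by rw [hsup], by rw [hsup], by rw [hsup], ?_⟩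
  intro z hz
  constructor
  · -- indeg
    rw [indeg_def, indeg_def, hE']
    by_cases hzw : z = w
    · subst hzw
      have : ((M.E.filter (fun e => e.1 ≠ v ∧ e.2 ≠ v)) ∪ {(u,z)}).filter
          (fun e => e.2 = z) = insert (u,z) ((M.E.filter (fun e => e.2 = z)).erase (v,z)) := by
        ext e
        simp only [Finset.filter_union, Finset.mem_union, Finset.mem_filter,
          Finset.mem_insert, Finset.mem_erase, Finset.mem_singleton]
        constructor
        · rintro (⟨⟨he, h1, h2⟩, h3⟩ | ⟨he, _⟩)
          · refine Or.inr ⟨?_, he, h3⟩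
            intro hc; rw [hc] at h1; exact h1 rfl
          · exact Or.inl he
        · rintro (rfl | ⟨hne, he, h3⟩)
          · exact Or.inr ⟨rfl, rfl⟩
          · refine Or.inl ⟨⟨he, ?_, ?_⟩, h3⟩
            · intro hc
              exact hne (eq_of_out_edges hout he hc)
            · rw [h3]; exact fun hc => hvw hc.symm
      rw [this, Finset.card_insert_of_notMem, Finset.card_erase_of_mem]
      · have hwge : 1 ≤ (M.E.filter (fun e => e.2 = z)).card :=
          Finset.card_pos.2 ⟨(v,z), Finset.mem_filter.2 ⟨hmemvw, rfl⟩⟩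
        omega
      · exact Finset.mem_filter.2 ⟨hmemvw, rfl⟩
      · intro hc
        exact hnew (Finset.mem_filter.mp (Finset.mem_erase.mp hc).2).1
    · -- z ≠ w, z ≠ v
      congr 1
      ext e
      simp only [Finset.filter_union, Finset.mem_union, Finset.mem_filter,
        Finset.mem_singleton]
      constructor
      · rintro (⟨⟨he, _, _⟩, h3⟩ | ⟨rfl, h3⟩)
        · exact ⟨he, h3⟩
        · exact absurd h3.symm hzw
      · rintro ⟨he, h3⟩
        refine Or.inl ⟨⟨he, ?_, ?_⟩, h3⟩
        · intro hc
          have := eq_of_out_edges hout he hc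
          rw [this] at h3; exact hzw h3.symm
        · rw [h3]; exact hz
  · -- outdeg
    rw [outdeg_def, outdeg_def, hE']
    by_cases hzu : z = u
    · subst hzu
      have : ((M.E.filter (fun e => e.1 ≠ v ∧ e.2 ≠ v)) ∪ {(z,w)}).filter
          (fun e => e.1 = z) = insert (z,w) ((M.E.filter (fun e => e.1 = z)).erase (z,v)) := by
        ext e
        simp only [Finset.filter_union, Finset.mem_union, Finset.mem_filter,
          Finset.mem_insert, Finset.mem_erase, Finset.mem_singleton]
        constructor
        · rintro (⟨⟨he, h1, h2⟩, h3⟩ | ⟨he, _⟩)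
          · refine Or.inr ⟨?_, he, h3⟩
            intro hc; rw [hc] at h2; exact h2 rfl
          · exact Or.inl he
        · rintro (rfl | ⟨hne, he, h3⟩)
          · exact Or.inr ⟨rfl, rfl⟩
          · refine Or.inl ⟨⟨he, ?_, ?_⟩, h3⟩
            · rw [h3]; exact huv
            · intro hc
              exact hne (eq_of_in_edges hin he hc)
      rw [this, Finset.card_insert_of_notMem, Finset.card_erase_of_mem]
      · have hwge : 1 ≤ (M.E.filter (fun e => e.1 = z)).card :=
          Finset.card_pos.2 ⟨(z,v), Finset.mem_filter.2 ⟨hmemuv, rfl⟩⟩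
        omega
      · exact Finset.mem_filter.2 ⟨hmemuv, rfl⟩
      · intro hc
        exact hnew (Finset.mem_filter.mp (Finset.mem_erase.mp hc).2).1
    · congr 1
      ext e
      simp only [Finset.filter_union, Finset.mem_union, Finset.mem_filter,
        Finset.mem_singleton]
      constructor
      · rintro (⟨⟨he, _, _⟩, h3⟩ | ⟨rfl, h3⟩)
        · exact ⟨he, h3⟩
        · exact absurd h3.symm hzu
      · rintro ⟨he, h3⟩
        refine Or.inl ⟨⟨he, ?_, ?_⟩, h3⟩
        · rw [h3]; exact hz
        · intro hc
          have := eq_of_in_edges hin he hc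
          rw [this] at h3; exact hzu h3.symm

end Network

namespace Network

variable {X : Type} {M : Network X}

/-- The invariant preserved by reductions: well-formedness minus
leaf-surjectivity, with acyclicity weakened to no loops or 2-cycles. -/
def Nice (N : Network X) : Prop :=
  N.root ∈ N.V ∧ N.indeg N.root = 0 ∧ N.outdeg N.root = 1 ∧
  (∀ e ∈ N.E, e.1 ∈ N.V ∧ e.2 ∈ N.V) ∧
  Set.InjOn N.label ↑N.taxa ∧
  (∀ x ∈ N.taxa, N.label x ∈ N.V ∧ N.IsLeafNode (N.label x)) ∧
  (∀ v ∈ N.V, v = N.root ∨ N.IsLeafNode v ∨ N.IsTreeNode v ∨ N.IsRetic v) ∧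
  (∀ a b : ℕ, (a,b) ∈ N.E → a ≠ b ∧ (b,a) ∉ N.E)

lemma nice_of_phylo {N : Network X} (h : N.IsPhylo) : N.Nice := by
  obtain ⟨h1, h2, h3, h4, h5, h6, _, h8, h9⟩ := h
  refine ⟨h1, h2, h3, h4, h5, h6, h8, ?_⟩
  intro a b hab
  constructor
  · rintro rfl
    exact h9 a (Relation.TransGen.single hab)
  · intro hba
    exact h9 a (Relation.TransGen.head hab (Relation.TransGen.single hba))

noncomputable def eRet (N : Network X) : ℕ := (N.E.filter (fun e => N.IsRetic e.2)).card
noncomputable def kRet (N : Network X) : ℕ := (N.V.filter (fun v => N.IsRetic v)).card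

lemma reticulationNumber_eq (N : Network X) :
    N.reticulationNumber = N.eRet - N.kRet := rfl

/-- In a nice network there are at least twice as many reticulation edges as
reticulations. -/
lemma two_kRet_le_eRet {N : Network X} (h : N.Nice) : 2 * N.kRet ≤ N.eRet := by
  obtain ⟨_, _, _, h4, _, _, _, _⟩ := h
  have hmap : ∀ e ∈ N.E.filter (fun e => N.IsRetic e.2), e.2 ∈ N.V.filter (fun v => N.IsRetic v) := by
    intro e he
    have := Finset.mem_filter.mp he
    exact Finset.mem_filter.2 ⟨(h4 e this.1).2, this.2⟩
  have hsum := Finset.card_eq_sum_card_fiberwise hmap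
  rw [eRet, kRet, hsum]
  have : ∀ v ∈ N.V.filter (fun v => N.IsRetic v),
      2 ≤ ((N.E.filter (fun e => N.IsRetic e.2)).filter (fun e => e.2 = v)).card := by
    intro v hv
    have hret := (Finset.mem_filter.mp hv).2
    have heq : (N.E.filter (fun e => N.IsRetic e.2)).filter (fun e => e.2 = v)
        = N.E.filter (fun e => e.2 = v) := by
      ext e
      simp only [Finset.mem_filter, and_assoc]
      constructor
      · rintro ⟨he, _, h2⟩; exact ⟨he, h2⟩
      · rintro ⟨he, h2⟩; refine ⟨he, ?_, h2⟩; rw [h2]; exact hret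
    rw [heq]
    exact hret.1
  calc 2 * (N.V.filter (fun v => N.IsRetic v)).card
      = ∑ _v ∈ N.V.filter (fun v => N.IsRetic v), 2 := by
        rw [Finset.sum_const, smul_eq_mul, mul_comm]
    _ ≤ _ := Finset.sum_le_sum this

/-- Generic transfer of `Nice` along a reduction-like transformation. -/
lemma nice_generic {M' : Network X} (hM : M.Nice)
    (hroot : M'.root = M.root) (hlab : M'.label = M.label)
    (htaxa : M'.taxa ⊆ M.taxa)
    (hV : M'.V ⊆ M.V) (hrootV : M.root ∈ M'.V)
    (hE : ∀ e ∈ M'.E, e.1 ∈ M'.V ∧ e.2 ∈ M'.V)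
    (hrev : ∀ a b : ℕ, (a,b) ∈ M'.E → a ≠ b ∧ (b,a) ∉ M'.E)
    (hdeg : ∀ z ∈ M'.V, (M'.indeg z = M.indeg z ∧ M'.outdeg z = M.outdeg z) ∨
      (M.IsTreeNode z ∧ M'.IsTreeNode z) ∨ (M.IsRetic z ∧ M'.IsRetic z))
    (htaxV : ∀ z ∈ M'.taxa, M'.label z ∈ M'.V) : M'.Nice := by
  obtain ⟨m1, m2, m3, m4, m5, m6, m7, m8⟩ := hM
  have hrootdeg : M'.indeg M'.root = 0 ∧ M'.outdeg M'.root = 1 := by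
    rw [hroot]
    rcases hdeg _ hrootV with ⟨h1, h2⟩ | ⟨⟨_, hc⟩, _⟩ | ⟨⟨hc, _⟩, _⟩
    · rw [h1, h2]; exact ⟨m2, m3⟩
    · rw [m3] at hc; omega
    · rw [m2] at hc; omega
  refine ⟨by rw [hroot]; exact hrootV, hrootdeg.1, hrootdeg.2, hE, ?_, ?_, ?_, hrev⟩
  · rw [hlab]
    exact m5.mono (by exact_mod_cast htaxa)
  · intro z hz
    have hzt := htaxa hz
    have hleaf := m6 z hzt
    have hV' := htaxV z hz
    rw [hlab] at hV' ⊢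
    refine ⟨hV', ?_⟩
    rcases hdeg _ hV' with ⟨h1, h2⟩ | ⟨⟨_, hc⟩, _⟩ | ⟨⟨_, hc⟩, _⟩
    · exact ⟨by rw [h1]; exact hleaf.2.1, by rw [h2]; exact hleaf.2.2⟩
    · rw [hleaf.2.2] at hc; omega
    · rw [hleaf.2.2] at hc; omega
  · intro v hv
    have hvV := hV hv
    rcases hdeg _ hv with ⟨h1, h2⟩ | ⟨_, ht⟩ | ⟨_, hr⟩
    · rcases m7 v hvV with hr | hl | ht | hrt
      · exact Or.inl (by rw [hroot, hr])
      · exact Or.inr (Or.inl ⟨by rw [h1]; exact hl.1, by rw [h2]; exact hl.2⟩)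
      · exact Or.inr (Or.inr (Or.inl ⟨by rw [h1]; exact ht.1, by rw [h2]; exact ht.2⟩))
      · exact Or.inr (Or.inr (Or.inr ⟨by rw [h1]; exact hrt.1, by rw [h2]; exact hrt.2⟩))
    · exact Or.inr (Or.inr (Or.inl ht))
    · exact Or.inr (Or.inr (Or.inr hr))

end Network

namespace Network

variable {X : Type} {M : Network X}

lemma no_out_edge {v : ℕ} (h : M.outdeg v = 0) {e : ℕ × ℕ} (he : e ∈ M.E) : e.1 ≠ v := by
  intro hc
  have he' : (v, e.2) ∈ M.E := by
    have h2 : (e.1, e.2) ∈ M.E := by rw [Prod.mk.eta]; exact he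
    rwa [hc] at h2
  exact outdeg_zero_no_edge h e.2 he'

lemma indeg_congr {A B : Network X} (h : A.E = B.E) (z : ℕ) : A.indeg z = B.indeg z := by
  rw [indeg_def, indeg_def, h]

lemma outdeg_congr {A B : Network X} (h : A.E = B.E) (z : ℕ) : A.outdeg z = B.outdeg z := by
  rw [outdeg_def, outdeg_def, h]

lemma cherry_step {x y : X} (hM : M.Nice) (h : M.IsCherry x y) :
    (M.reducePair (x,y)).Nice ∧ (M.reducePair (x,y)).taxa = M.taxa.erase x ∧
    (M.reducePair (x,y)).eRet = M.eRet ∧ (M.reducePair (x,y)).kRet = M.kRet := by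
  obtain ⟨r1, r2, r3, r4, r5, r6, r7, r8⟩ := hM
  obtain ⟨hx, hy, hxy, p, hpx, hpy⟩ := h
  set lx := M.label x with hlxdef
  set ly := M.label y with hlydef
  have hlxleaf : lx ∈ M.V ∧ M.IsLeafNode lx := r6 x hx
  have hlyleaf : ly ∈ M.V ∧ M.IsLeafNode ly := r6 y hy
  have hne : lx ≠ ly := fun hc => hxy (r5 (Finset.mem_coe.2 hx) (Finset.mem_coe.2 hy) hc)
  have hinx : M.E.filter (fun e => e.2 = lx) = {(p, lx)} := in_edges_eq hlxleaf.2.1 hpx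
  have hiny : M.E.filter (fun e => e.2 = ly) = {(p, ly)} := in_edges_eq hlyleaf.2.1 hpy
  have hpar : M.theParent lx = p := theParent_spec hinx
  have hpV : p ∈ M.V := (r4 _ hpx).1
  have houtp2 : 2 ≤ M.outdeg p := by
    have hsub : ({(p,lx),(p,ly)} : Finset (ℕ × ℕ)) ⊆ M.E.filter (fun e => e.1 = p) := by
      intro e he
      simp only [Finset.mem_insert, Finset.mem_singleton] at he
      rcases he with rfl | rfl
      · exact Finset.mem_filter.2 ⟨hpx, rfl⟩
      · exact Finset.mem_filter.2 ⟨hpy, rfl⟩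
    have h2 : ({(p,lx),(p,ly)} : Finset (ℕ × ℕ)).card = 2 := by
      rw [Finset.card_insert_of_notMem (by simp [hne]), Finset.card_singleton]
    rw [outdeg_def]
    calc 2 = ({(p,lx),(p,ly)} : Finset (ℕ × ℕ)).card := h2.symm
      _ ≤ _ := Finset.card_le_card hsub
  have hproot : p ≠ M.root := by
    intro hc; rw [hc, r3] at houtp2; omega
  have hptree : M.IsTreeNode p := by
    rcases r7 p hpV with hc | hc | hc | hc
    · exact absurd hc hproot
    · rw [IsLeafNode] at hc; omega
    · exact hc
    · rw [IsRetic] at hc; omega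
  have hindp : M.indeg p = 1 := hptree.1
  obtain ⟨g, hing⟩ := indeg_one_spec hindp
  have hgp : (g, p) ∈ M.E := mem_of_in_edges_eq hing
  have hgV : g ∈ M.V := (r4 _ hgp).1
  have hgnp : g ≠ p := (r8 g p hgp).1
  have hplx : p ≠ lx := by
    intro hc; rw [hc, hlxleaf.2.2] at houtp2; omega
  have hply : p ≠ ly := by
    intro hc; rw [hc, hlyleaf.2.2] at houtp2; omega
  have hglx : g ≠ lx := by
    intro hc; rw [hc] at hgp
    exact outdeg_zero_no_edge hlxleaf.2.2 p hgp
  have hgly : g ≠ ly := by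
    intro hc; rw [hc] at hgp
    exact outdeg_zero_no_edge hlyleaf.2.2 p hgp
  have hrootlx : M.root ≠ lx := by
    intro hc
    have h1 := hlxleaf.2.1
    rw [← hc, r2] at h1
    omega
  have hrootly : M.root ≠ ly := by
    intro hc
    have h1 := hlyleaf.2.1
    rw [← hc, r2] at h1
    omega
  set M₁ : Network X := ⟨M.V.erase lx, M.E.filter (fun e => e.1 ≠ lx ∧ e.2 ≠ lx),
    M.root, M.taxa.erase x, M.label⟩ with hM₁
  have hrp : M.reducePair (x,y) = M₁.suppress p := by
    have hpar' : M.theParent (M.label (x,y).1) = p := hpar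
    have hch : M.IsCherry (x,y).1 (x,y).2 := ⟨hx, hy, hxy, p, hpx, hpy⟩
    unfold reducePair
    rw [if_pos hch, hpar']
  -- membership in M₁.E
  have hmem1 : ∀ e : ℕ × ℕ, e ∈ M₁.E ↔ (e ∈ M.E ∧ e.1 ≠ lx ∧ e.2 ≠ lx) := by
    intro e; rw [hM₁]; exact Finset.mem_filter.trans (by tauto)
  have hmem1' : ∀ e : ℕ × ℕ, e ∈ M.E → e.2 ≠ lx → e ∈ M₁.E := by
    intro e he h2
    exact (hmem1 e).2 ⟨he, no_out_edge hlxleaf.2.2 he, h2⟩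
  -- degrees in M₁
  have hdin : ∀ z, z ≠ lx → M₁.indeg z = M.indeg z := by
    intro z hz
    rw [indeg_def, indeg_def]
    congr 1
    ext e
    simp only [Finset.mem_filter, hmem1]
    constructor
    · rintro ⟨⟨he, _, _⟩, h3⟩
      exact ⟨he, h3⟩
    · rintro ⟨he, h3⟩
      exact ⟨⟨he, no_out_edge hlxleaf.2.2 he, by rw [h3]; exact hz⟩, h3⟩
  have hdout : ∀ z, z ≠ p → M₁.outdeg z = M.outdeg z := by
    intro z hz
    rw [outdeg_def, outdeg_def]
    congr 1
    ext e
    simp only [Finset.mem_filter, hmem1]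
    constructor
    · rintro ⟨⟨he, _, _⟩, h3⟩
      exact ⟨he, h3⟩
    · rintro ⟨he, h3⟩
      refine ⟨⟨he, no_out_edge hlxleaf.2.2 he, ?_⟩, h3⟩
      intro hc
      have := eq_of_in_edges hinx he hc
      rw [this] at h3
      exact hz h3.symm
  have hfiltp : M₁.E.filter (fun e => e.1 = p) = (M.E.filter (fun e => e.1 = p)).erase (p, lx) := by
    ext e
    simp only [Finset.mem_filter, hmem1, Finset.mem_erase]
    constructor
    · rintro ⟨⟨he, _, hh2⟩, h3⟩
      refine ⟨?_, he, h3⟩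
      intro hc; rw [hc] at hh2; exact hh2 rfl
    · rintro ⟨hne', he, h3⟩
      refine ⟨⟨he, no_out_edge hlxleaf.2.2 he, ?_⟩, h3⟩
      intro hc
      exact hne' (eq_of_in_edges hinx he hc)
  have hmemplx : (p,lx) ∈ M.E.filter (fun e => e.1 = p) := Finset.mem_filter.2 ⟨hpx, rfl⟩
  have hdoutp : M₁.outdeg p = M.outdeg p - 1 := by
    rw [outdeg_def, hfiltp, Finset.card_erase_of_mem hmemplx, outdeg_def]
  have hdinp : M₁.indeg p = 1 := by rw [hdin p hplx]; exact hindp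
  -- M₁ structure facts used by both cases
  have hV1 : M₁.V = M.V.erase lx := by rw [hM₁]
  have htaxa1 : M₁.taxa = M.taxa.erase x := by rw [hM₁]
  have hlab1 : M₁.label = M.label := by rw [hM₁]
  have hroot1 : M₁.root = M.root := by rw [hM₁]
  rw [hrp]
  by_cases h2 : M.outdeg p = 2
  · -- CASE B : outdeg p = 2, the parent is suppressed
    have houtpair : M.E.filter (fun e => e.1 = p) = {(p,lx),(p,ly)} :=
      out_edges_pair h2 hpx hpy hne
    have hin1p : M₁.E.filter (fun e => e.2 = p) = {(g,p)} := by
      ext e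
      simp only [Finset.mem_filter, hmem1, Finset.mem_singleton]
      constructor
      · rintro ⟨⟨he, _, _⟩, h3⟩
        exact eq_of_in_edges hing he h3
      · rintro rfl
        exact ⟨⟨hgp, hglx, hplx⟩, rfl⟩
    have hout1p : M₁.E.filter (fun e => e.1 = p) = {(p,ly)} := by
      rw [hfiltp, houtpair]
      exact Finset.erase_insert (by simp [hne])
    have hnew1 : (g, ly) ∉ M₁.E := by
      intro hc
      have hcM := ((hmem1 _).1 hc).1
      have heq := eq_of_in_edges hiny hcM rfl
      exact hgnp (congrArg Prod.fst heq)
    obtain ⟨sE, sV, sroot, staxa, slabel, sdeg⟩ :=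
      suppress_spec (M := M₁) hin1p hout1p hgnp hply hgly hnew1
    have hmem' : ∀ e : ℕ × ℕ, e ∈ (M₁.suppress p).E ↔
        ((e ∈ M.E ∧ e.1 ≠ lx ∧ e.2 ≠ lx ∧ e.1 ≠ p ∧ e.2 ≠ p) ∨ e = (g,ly)) := by
      intro e
      rw [sE, Finset.mem_union, Finset.mem_filter, Finset.mem_singleton]
      constructor
      · rintro (⟨he1, hp1, hp2⟩ | hh)
        · obtain ⟨he, hq1, hq2⟩ := (hmem1 e).1 he1
          exact Or.inl ⟨he, hq1, hq2, hp1, hp2⟩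
        · exact Or.inr hh
      · rintro (⟨he, hq1, hq2, h3, h4⟩ | hh)
        · exact Or.inl ⟨(hmem1 e).2 ⟨he, hq1, hq2⟩, h3, h4⟩
        · exact Or.inr hh
    have hdeg' : ∀ z, z ≠ p → z ≠ lx →
        (M₁.suppress p).indeg z = M.indeg z ∧ (M₁.suppress p).outdeg z = M.outdeg z := by
      intro z hz1 hz2
      obtain ⟨d1, d2⟩ := sdeg z hz1
      exact ⟨by rw [d1, hdin z hz2], by rw [d2, hdout z hz1]⟩
    have hiff : ∀ z, z ≠ p → z ≠ lx → ((M₁.suppress p).IsRetic z ↔ M.IsRetic z) := by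
      intro z hz1 hz2
      rw [IsRetic, IsRetic, (hdeg' z hz1 hz2).1, (hdeg' z hz1 hz2).2]
    have hlynp : ly ≠ p := fun hc => hply hc.symm
    have hlynlx : ly ≠ lx := fun hc => hne hc.symm
    refine ⟨?_, staxa.trans htaxa1, ?_, ?_⟩
    · -- Nice
      refine nice_generic ⟨r1, r2, r3, r4, r5, r6, r7, r8⟩ (sroot.trans hroot1)
        (slabel.trans hlab1) (by rw [staxa, htaxa1]; exact Finset.erase_subset _ _)
        (by rw [sV, hV1]
            exact (Finset.erase_subset _ _).trans (Finset.erase_subset _ _))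
        (by rw [sV, hV1]
            exact Finset.mem_erase.2 ⟨fun hc => hproot hc.symm,
              Finset.mem_erase.2 ⟨hrootlx, r1⟩⟩) ?_ ?_ ?_ ?_
      · intro e he
        rw [sV, hV1]
        rcases (hmem' e).1 he with ⟨heM, hq1, hq2, h3, h4⟩ | heq
        · exact ⟨Finset.mem_erase.2 ⟨h3, Finset.mem_erase.2 ⟨hq1, (r4 e heM).1⟩⟩,
            Finset.mem_erase.2 ⟨h4, Finset.mem_erase.2 ⟨hq2, (r4 e heM).2⟩⟩⟩
        · rw [heq]
          exact ⟨Finset.mem_erase.2 ⟨hgnp, Finset.mem_erase.2 ⟨hglx, hgV⟩⟩,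
            Finset.mem_erase.2 ⟨hlynp, Finset.mem_erase.2 ⟨hlynlx, hlyleaf.1⟩⟩⟩
      · intro a b hab
        rcases (hmem' _).1 hab with ⟨he, _, _, _, _⟩ | heq
        · refine ⟨(r8 a b he).1, ?_⟩
          intro hba
          rcases (hmem' _).1 hba with ⟨hbe, _⟩ | hbeq
          · exact (r8 a b he).2 hbe
          · have ha : a = ly := congrArg Prod.snd hbeq
            rw [ha] at he
            exact outdeg_zero_no_edge hlyleaf.2.2 b he
        · have hag : a = g := congrArg Prod.fst heq
          have hbl : b = ly := congrArg Prod.snd heq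
          constructor
          · rw [hag, hbl]; exact hgly
          · intro hba
            rcases (hmem' _).1 hba with ⟨hbe, _⟩ | hbeq
            · rw [hbl] at hbe
              exact outdeg_zero_no_edge hlyleaf.2.2 a hbe
            · have hbg : b = g := congrArg Prod.fst hbeq
              rw [hbl] at hbg
              exact hgly hbg.symm
      · intro z hz
        rw [sV, hV1] at hz
        have hz1 : z ≠ p := (Finset.mem_erase.mp hz).1
        have hz2 : z ≠ lx := (Finset.mem_erase.mp (Finset.mem_erase.mp hz).2).1
        exact Or.inl (hdeg' z hz1 hz2)
      · intro z hz
        rw [staxa, htaxa1] at hz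
        obtain ⟨hz1, hz2⟩ := Finset.mem_erase.mp hz
        rw [slabel, hlab1, sV, hV1]
        have hlf := (r6 z hz2).2
        refine Finset.mem_erase.2 ⟨?_, Finset.mem_erase.2 ⟨?_, (r6 z hz2).1⟩⟩
        · intro hc
          have h0 := hlf.2
          rw [hc, h2] at h0
          omega
        · intro hc
          exact hz1 (r5 (Finset.mem_coe.2 hz2) (Finset.mem_coe.2 hx) hc)
    · -- eRet
      rw [eRet, eRet]
      congr 1
      ext e
      simp only [Finset.mem_filter]
      constructor
      · rintro ⟨he, hr⟩
        rcases (hmem' e).1 he with ⟨heM, hq1, hq2, h3, h4⟩ | heq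
        · exact ⟨heM, (hiff e.2 h4 hq2).1 hr⟩
        · exfalso
          have h5 : e.2 = ly := congrArg Prod.snd heq
          rw [IsRetic] at hr
          have hd := (hdeg' ly hlynp hlynlx).2
          rw [h5, hd, hlyleaf.2.2] at hr
          omega
      · rintro ⟨he, hr⟩
        rw [IsRetic] at hr
        have h2x : e.2 ≠ lx := by
          intro hc; rw [hc, hlxleaf.2.2] at hr; omega
        have h2p : e.2 ≠ p := by
          intro hc; rw [hc, hindp] at hr; omega
        have h1x : e.1 ≠ lx := no_out_edge hlxleaf.2.2 he
        have h1p : e.1 ≠ p := by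
          intro hc
          have hmem : e ∈ M.E.filter (fun e => e.1 = p) := Finset.mem_filter.2 ⟨he, hc⟩
          rw [houtpair] at hmem
          simp only [Finset.mem_insert, Finset.mem_singleton] at hmem
          rcases hmem with h' | h'
          · exact h2x (congrArg Prod.snd h')
          · have := congrArg Prod.snd h'
            rw [this, hlyleaf.2.2] at hr
            omega
        refine ⟨(hmem' e).2 (Or.inl ⟨he, h1x, h2x, h1p, h2p⟩), ?_⟩
        rw [hiff e.2 h2p h2x, IsRetic]
        exact hr
    · -- kRet
      rw [kRet, kRet]
      congr 1
      ext z
      simp only [Finset.mem_filter, sV, hV1, Finset.mem_erase]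
      constructor
      · rintro ⟨⟨hz1, hz2, hz3⟩, hr⟩
        exact ⟨hz3, (hiff z hz1 hz2).1 hr⟩
      · rintro ⟨hzV, hr⟩
        rw [IsRetic] at hr
        have hz2 : z ≠ lx := by
          intro hc; rw [hc, hlxleaf.2.2] at hr; omega
        have hz1 : z ≠ p := by
          intro hc; rw [hc, hindp] at hr; omega
        refine ⟨⟨hz1, hz2, hzV⟩, ?_⟩
        rw [hiff z hz1 hz2, IsRetic]
        exact hr
  · -- CASE A : outdeg p ≥ 3, suppress is the identity
    have h3le : 3 ≤ M.outdeg p := by omega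
    have hsup : M₁.suppress p = M₁ := by
      apply suppress_of_not
      rintro ⟨_, hc⟩
      rw [hdoutp] at hc
      omega
    rw [hsup]
    have hiff : ∀ z, z ≠ lx → z ≠ p → (M₁.IsRetic z ↔ M.IsRetic z) := by
      intro z hz1 hz2
      rw [IsRetic, IsRetic, hdin z hz1, hdout z hz2]
    have hreticp : ¬ M.IsRetic p := by rw [IsRetic]; omega
    have hreticp1 : ¬ M₁.IsRetic p := by rw [IsRetic, hdinp]; omega
    have hiff' : ∀ z, z ≠ lx → (M₁.IsRetic z ↔ M.IsRetic z) := by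
      intro z hz1
      by_cases hz2 : z = p
      · subst hz2; exact iff_of_false hreticp1 hreticp
      · exact hiff z hz1 hz2
    refine ⟨?_, htaxa1, ?_, ?_⟩
    · -- Nice M₁
      refine nice_generic ⟨r1, r2, r3, r4, r5, r6, r7, r8⟩ hroot1 hlab1
        (htaxa1 ▸ Finset.erase_subset _ _) (hV1 ▸ Finset.erase_subset _ _)
        (hV1 ▸ Finset.mem_erase.2 ⟨hrootlx, r1⟩) ?_ ?_ ?_ ?_
      · intro e he
        obtain ⟨heM, hh1, hh2⟩ := (hmem1 e).1 he
        rw [hV1]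
        exact ⟨Finset.mem_erase.2 ⟨hh1, (r4 e heM).1⟩, Finset.mem_erase.2 ⟨hh2, (r4 e heM).2⟩⟩
      · intro a b hab
        have habM := ((hmem1 _).1 hab).1
        refine ⟨(r8 a b habM).1, ?_⟩
        intro hc
        exact (r8 a b habM).2 ((hmem1 _).1 hc).1
      · intro z hz
        rw [hV1] at hz
        have hz1 : z ≠ lx := (Finset.mem_erase.mp hz).1
        by_cases hz2 : z = p
        · subst hz2
          refine Or.inr (Or.inl ⟨hptree, ⟨hdinp, ?_⟩⟩)
          rw [hdoutp]; omega
        · exact Or.inl ⟨hdin z hz1, hdout z hz2⟩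
      · intro z hz
        rw [htaxa1] at hz
        obtain ⟨hz1, hz2⟩ := Finset.mem_erase.mp hz
        rw [hlab1, hV1]
        refine Finset.mem_erase.2 ⟨?_, (r6 z hz2).1⟩
        intro hc
        exact hz1 (r5 (Finset.mem_coe.2 hz2) (Finset.mem_coe.2 hx) hc)
    · -- eRet
      rw [eRet, eRet]
      congr 1
      ext e
      simp only [Finset.mem_filter, hmem1]
      constructor
      · rintro ⟨⟨he, _, hh2⟩, hr⟩
        exact ⟨he, (hiff' e.2 hh2).1 hr⟩
      · rintro ⟨he, hr⟩
        have hh2 : e.2 ≠ lx := by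
          intro hc; rw [hc, IsRetic, hlxleaf.2.2] at hr; omega
        exact ⟨⟨he, no_out_edge hlxleaf.2.2 he, hh2⟩, (hiff' e.2 hh2).2 hr⟩
    · -- kRet
      rw [kRet, kRet]
      congr 1
      ext z
      simp only [Finset.mem_filter, hV1, Finset.mem_erase]
      constructor
      · rintro ⟨⟨hz1, hzV⟩, hr⟩
        exact ⟨hzV, (hiff' z hz1).1 hr⟩
      · rintro ⟨hzV, hr⟩
        have hz1 : z ≠ lx := by
          intro hc; rw [hc, IsRetic, hlxleaf.2.2] at hr; omega
        exact ⟨⟨hz1, hzV⟩, (hiff' z hz1).2 hr⟩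

end Network

namespace Network

variable {X : Type} {M : Network X}

lemma retfinish {N' : Network X} {lx ly px py : ℕ} {W : Finset (ℕ × ℕ)} {D : Finset ℕ}
    (hM : M.Nice)
    (hlxleaf : lx ∈ M.V ∧ M.IsLeafNode lx) (hlyleaf : ly ∈ M.V ∧ M.IsLeafNode ly)
    (hpxe : (px, lx) ∈ M.E) (hpypx : (py, px) ∈ M.E)
    (hpxret : M.IsRetic px) (hpytree : M.IsTreeNode py)
    (hDsub : ∀ z ∈ D, z = py ∨ z = px)
    (hDpy : py ∈ D ↔ M.outdeg py = 2) (hDpx : px ∈ D ↔ M.indeg px = 2)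
    (H1 : N'.V = M.V \ D)
    (H2 : ∀ e ∈ N'.E, (e ∈ M.E ∧ e ≠ (py,px) ∧ e.1 ∉ D ∧ e.2 ∉ D) ∨ e ∈ W)
    (H2b : ∀ e ∈ M.E, M.IsRetic e.2 → e ≠ (py,px) → (px ∈ D → e.2 ≠ px) → e ∈ N'.E)
    (HW : ∀ e ∈ W, e.1 ∈ M.V ∧ e.1 ∉ D ∧ (e.2 = lx ∨ e.2 = ly) ∧ e.1 ≠ lx ∧ e.1 ≠ ly)
    (Hdeg : ∀ z, z ∉ D → z ≠ py → z ≠ px →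
      N'.indeg z = M.indeg z ∧ N'.outdeg z = M.outdeg z)
    (hpyD : py ∉ D → N'.indeg py = 1 ∧ N'.outdeg py = M.outdeg py - 1)
    (hpxD : px ∉ D → N'.indeg px = M.indeg px - 1 ∧ N'.outdeg px = 1)
    (HFt : N'.taxa = M.taxa) (HFl : N'.label = M.label) (HFr : N'.root = M.root) :
    N'.Nice ∧
    ((N'.eRet + 1 = M.eRet ∧ N'.kRet = M.kRet) ∨
     (N'.eRet + 2 = M.eRet ∧ N'.kRet + 1 = M.kRet)) := by
  obtain ⟨m1, m2, m3, m4, m5, m6, m7, m8⟩ := hM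
  have houtpx1 : M.outdeg px = 1 := hpxret.2
  have hinpx2 : 2 ≤ M.indeg px := hpxret.1
  have hinpy1 : M.indeg py = 1 := hpytree.1
  have houtpy2 : 2 ≤ M.outdeg py := hpytree.2
  have hpxV : px ∈ M.V := (m4 _ hpypx).2
  have hpyV : py ∈ M.V := (m4 _ hpypx).1
  have hlxpy : lx ≠ py := by
    intro hc; have := hlxleaf.2.2; rw [hc] at this; omega
  have hlxpx : lx ≠ px := by
    intro hc; have := hlxleaf.2.2; rw [hc, houtpx1] at this; omega
  have hlypy : ly ≠ py := by
    intro hc; have := hlyleaf.2.2; rw [hc] at this; omega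
  have hlypx : ly ≠ px := by
    intro hc; have := hlyleaf.2.2; rw [hc, houtpx1] at this; omega
  have hrootpy : M.root ≠ py := by
    intro hc; rw [← hc, m3] at houtpy2; omega
  have hrootpx : M.root ≠ px := by
    intro hc; rw [← hc, m2] at hinpx2; omega
  have hrootD : M.root ∉ D := by
    intro hc; rcases hDsub _ hc with h | h
    · exact hrootpy h
    · exact hrootpx h
  have hlxD : lx ∉ D := by
    intro hc; rcases hDsub _ hc with h | h
    · exact hlxpy h
    · exact hlxpx h
  have hlyD : ly ∉ D := by
    intro hc; rcases hDsub _ hc with h | h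
    · exact hlypy h
    · exact hlypx h
  have houtpxfil : M.E.filter (fun e => e.1 = px) = {(px,lx)} := out_edges_eq houtpx1 hpxe
  have hreticpy : ¬ M.IsRetic py := by rw [IsRetic]; omega
  have hreticlx : ¬ M.IsRetic lx := by
    rw [IsRetic, hlxleaf.2.2]; omega
  have hreticly : ¬ M.IsRetic ly := by
    rw [IsRetic, hlyleaf.2.2]; omega
  have hiff : ∀ z, z ∉ D → z ≠ py → z ≠ px → (N'.IsRetic z ↔ M.IsRetic z) := by
    intro z h1 h2 h3
    rw [IsRetic, IsRetic, (Hdeg z h1 h2 h3).1, (Hdeg z h1 h2 h3).2]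
  have hiffpy : py ∉ D → ¬ N'.IsRetic py := by
    intro h1 hr
    have h3 : M.outdeg py ≠ 2 := fun hc => h1 (hDpy.2 hc)
    have h4 := (hpyD h1).2
    rw [IsRetic, h4] at hr
    omega
  have hiffpx : px ∉ D → N'.IsRetic px := by
    intro h1
    have h3 : M.indeg px ≠ 2 := fun hc => h1 (hDpx.2 hc)
    have h4 := hpxD h1
    rw [IsRetic, h4.1, h4.2]
    omega
  have hVmem : ∀ z, z ∈ N'.V ↔ (z ∈ M.V ∧ z ∉ D) := by
    intro z; rw [H1, Finset.mem_sdiff]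
  constructor
  · -- Nice
    refine nice_generic ⟨m1, m2, m3, m4, m5, m6, m7, m8⟩ HFr HFl (by rw [HFt])
      (by rw [H1]; exact Finset.sdiff_subset)
      ((hVmem _).2 ⟨m1, hrootD⟩) ?_ ?_ ?_ ?_
    · intro e he
      rcases H2 e he with ⟨heM, _, h1, h2⟩ | hw
      · exact ⟨(hVmem _).2 ⟨(m4 e heM).1, h1⟩, (hVmem _).2 ⟨(m4 e heM).2, h2⟩⟩
      · obtain ⟨w1, w2, w3, _, _⟩ := HW e hw
        refine ⟨(hVmem _).2 ⟨w1, w2⟩, (hVmem _).2 ?_⟩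
        rcases w3 with h | h
        · rw [h]; exact ⟨hlxleaf.1, hlxD⟩
        · rw [h]; exact ⟨hlyleaf.1, hlyD⟩
    · intro a b hab
      rcases H2 _ hab with ⟨heM, _, _, _⟩ | hw
      · refine ⟨(m8 a b heM).1, ?_⟩
        intro hba
        rcases H2 _ hba with ⟨hbM, _, _, _⟩ | hbw
        · exact (m8 a b heM).2 hbM
        · obtain ⟨_, _, w3, _, _⟩ := HW _ hbw
          rcases w3 with h | h
          · rw [show a = lx from h] at heM
            exact outdeg_zero_no_edge hlxleaf.2.2 b heM
          · rw [show a = ly from h] at heM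
            exact outdeg_zero_no_edge hlyleaf.2.2 b heM
      · obtain ⟨_, _, w3, w4, w5⟩ := HW _ hw
        constructor
        · intro hc
          rcases w3 with h | h
          · exact w4 (hc.trans h)
          · exact w5 (hc.trans h)
        · intro hba
          rcases H2 _ hba with ⟨hbM, _, _, _⟩ | hbw
          · rcases w3 with h | h
            · rw [show b = lx from h] at hbM
              exact outdeg_zero_no_edge hlxleaf.2.2 a hbM
            · rw [show b = ly from h] at hbM
              exact outdeg_zero_no_edge hlyleaf.2.2 a hbM
          · obtain ⟨_, _, _, v4, v5⟩ := HW _ hbw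
            rcases w3 with h | h
            · exact v4 h
            · exact v5 h
    · intro z hz
      obtain ⟨hzV, hzD⟩ := (hVmem z).1 hz
      by_cases h1 : z = py
      · subst h1
        have h3 : M.outdeg z ≠ 2 := fun hc => hzD (hDpy.2 hc)
        have h4 := hpyD hzD
        exact Or.inr (Or.inl ⟨hpytree, h4.1, by omega⟩)
      · by_cases h2 : z = px
        · subst h2
          have h4 := hpxD hzD
          exact Or.inr (Or.inr ⟨hpxret, hiffpx hzD⟩)
        · exact Or.inl (Hdeg z hzD h1 h2)
    · intro z hz
      rw [HFt] at hz
      rw [HFl]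
      have hlf := m6 z hz
      refine (hVmem _).2 ⟨hlf.1, ?_⟩
      intro hc
      rcases hDsub _ hc with h | h
      · have := hlf.2.2; rw [h] at this; omega
      · have := hlf.2.2; rw [h, houtpx1] at this; omega
  · -- counting
    have hWnotret : ∀ e ∈ W, ¬ N'.IsRetic e.2 := by
      intro e hw hr
      obtain ⟨_, _, w3, _, _⟩ := HW e hw
      rcases w3 with h | h
      · rw [h] at hr
        rw [hiff lx hlxD hlxpy hlxpx] at hr
        exact hreticlx hr
      · rw [h] at hr
        rw [hiff ly hlyD hlypy hlypx] at hr
        exact hreticly hr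
    by_cases hcase : px ∈ D
    · -- px suppressed : indeg px = 2
      right
      have hindpx2 : M.indeg px = 2 := hDpx.1 hcase
      obtain ⟨p', hp'ne, hp'e, hinfilpx⟩ := in_edges_pair hindpx2 hpypx
      have hretforward : ∀ e ∈ N'.E, N'.IsRetic e.2 → e ∈ M.E ∧ M.IsRetic e.2 ∧
          e ≠ (py,px) ∧ e ≠ (p',px) := by
        intro e he hr
        rcases H2 e he with ⟨heM, hne1, _, hD2⟩ | hw
        · have h2px : e.2 ≠ px := fun hc => hD2 (hc ▸ hcase)
          have h2py : M.IsRetic e.2 := by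
            by_cases hpy' : e.2 = py
            · exfalso
              have hpyD' : py ∉ D := fun hc => hD2 (hpy' ▸ hc)
              rw [hpy'] at hr
              exact hiffpy hpyD' hr
            · exact (hiff e.2 hD2 hpy' h2px).1 hr
          refine ⟨heM, h2py, hne1, ?_⟩
          intro hc
          exact h2px (congrArg Prod.snd hc)
        · exact absurd hr (hWnotret e hw)
      have hseteq : N'.E.filter (fun e => N'.IsRetic e.2) =
          ((M.E.filter (fun e => M.IsRetic e.2)).erase (py,px)).erase (p',px) := by
        ext e
        simp only [Finset.mem_filter, Finset.mem_erase]
        constructor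
        · rintro ⟨he, hr⟩
          obtain ⟨heM, hr', hne1, hne2⟩ := hretforward e he hr
          exact ⟨hne2, hne1, heM, hr'⟩
        · rintro ⟨hne2, hne1, heM, hr⟩
          have h2px : e.2 ≠ px := by
            intro hc
            have : e ∈ M.E.filter (fun e => e.2 = px) := Finset.mem_filter.2 ⟨heM, hc⟩
            rw [hinfilpx] at this
            simp only [Finset.mem_insert, Finset.mem_singleton] at this
            rcases this with h | h
            · exact hne1 h
            · exact hne2 h
          have hmem := H2b e heM hr hne1 (fun _ => h2px)
          refine ⟨hmem, ?_⟩
          have h2py : e.2 ≠ py := fun hc => hreticpy (hc ▸ hr)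
          have h2D : e.2 ∉ D := by
            intro hc
            rcases hDsub _ hc with h | h
            · exact h2py h
            · exact h2px h
          exact (hiff e.2 h2D h2py h2px).2 hr
      have hkseteq : N'.V.filter (fun v => N'.IsRetic v) =
          (M.V.filter (fun v => M.IsRetic v)).erase px := by
        ext z
        simp only [Finset.mem_filter, Finset.mem_erase]
        constructor
        · rintro ⟨hz, hr⟩
          obtain ⟨hzV, hzD⟩ := (hVmem z).1 hz
          have hzpx : z ≠ px := fun hc => hzD (hc ▸ hcase)
          have hzpy : z ≠ py := by
            intro hc
            subst hc
            exact hiffpy hzD hr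
          exact ⟨hzpx, hzV, (hiff z hzD hzpy hzpx).1 hr⟩
        · rintro ⟨hzpx, hzV, hr⟩
          have hzpy : z ≠ py := fun hc => hreticpy (hc ▸ hr)
          have hzD : z ∉ D := by
            intro hc
            rcases hDsub _ hc with h | h
            · exact hzpy h
            · exact hzpx h
          exact ⟨(hVmem z).2 ⟨hzV, hzD⟩, (hiff z hzD hzpy hzpx).2 hr⟩
      constructor
      · -- eRet + 2 = eRet
        have hm1 : (py,px) ∈ M.E.filter (fun e => M.IsRetic e.2) :=
          Finset.mem_filter.2 ⟨hpypx, hpxret⟩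
        have hm2 : (p',px) ∈ (M.E.filter (fun e => M.IsRetic e.2)).erase (py,px) := by
          refine Finset.mem_erase.2 ⟨?_, Finset.mem_filter.2 ⟨hp'e, hpxret⟩⟩
          intro hc
          exact hp'ne (congrArg Prod.fst hc).symm
        have hc1 := Finset.card_erase_of_mem hm1
        have hc2 := Finset.card_erase_of_mem hm2
        have hp1 : 1 ≤ (M.E.filter (fun e => M.IsRetic e.2)).card :=
          Finset.card_pos.2 ⟨_, hm1⟩
        have hp2 : 1 ≤ ((M.E.filter (fun e => M.IsRetic e.2)).erase (py,px)).card :=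
          Finset.card_pos.2 ⟨_, hm2⟩
        rw [eRet, eRet, hseteq]
        omega
      · -- kRet + 1 = kRet
        have hm1 : px ∈ M.V.filter (fun v => M.IsRetic v) :=
          Finset.mem_filter.2 ⟨hpxV, hpxret⟩
        have hc1 := Finset.card_erase_of_mem hm1
        have hp1 : 1 ≤ (M.V.filter (fun v => M.IsRetic v)).card :=
          Finset.card_pos.2 ⟨_, hm1⟩
        rw [kRet, kRet, hkseteq]
        omega
    · -- px kept : indeg px ≥ 3
      left
      have hretforward : ∀ e ∈ N'.E, N'.IsRetic e.2 → e ∈ M.E ∧ M.IsRetic e.2 ∧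
          e ≠ (py,px) := by
        intro e he hr
        rcases H2 e he with ⟨heM, hne1, _, hD2⟩ | hw
        · refine ⟨heM, ?_, hne1⟩
          by_cases hpx' : e.2 = px
          · rw [hpx']; exact hpxret
          · by_cases hpy' : e.2 = py
            · exfalso
              have hpyD' : py ∉ D := fun hc => hD2 (hpy' ▸ hc)
              rw [hpy'] at hr
              exact hiffpy hpyD' hr
            · exact (hiff e.2 hD2 hpy' hpx').1 hr
        · exact absurd hr (hWnotret e hw)
      have hseteq : N'.E.filter (fun e => N'.IsRetic e.2) =
          (M.E.filter (fun e => M.IsRetic e.2)).erase (py,px) := by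
        ext e
        simp only [Finset.mem_filter, Finset.mem_erase]
        constructor
        · rintro ⟨he, hr⟩
          obtain ⟨heM, hr', hne1⟩ := hretforward e he hr
          exact ⟨hne1, heM, hr'⟩
        · rintro ⟨hne1, heM, hr⟩
          have hmem := H2b e heM hr hne1 (fun hc => absurd hc hcase)
          refine ⟨hmem, ?_⟩
          have h2py : e.2 ≠ py := fun hc => hreticpy (hc ▸ hr)
          have h2D : e.2 ∉ D := by
            intro hc
            rcases hDsub _ hc with h | h
            · exact h2py h
            · exact hcase (h ▸ hc)
          by_cases hpx' : e.2 = px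
          · rw [hpx']; exact hiffpx hcase
          · exact (hiff e.2 h2D h2py hpx').2 hr
      have hkseteq : N'.V.filter (fun v => N'.IsRetic v) =
          M.V.filter (fun v => M.IsRetic v) := by
        ext z
        simp only [Finset.mem_filter]
        constructor
        · rintro ⟨hz, hr⟩
          obtain ⟨hzV, hzD⟩ := (hVmem z).1 hz
          refine ⟨hzV, ?_⟩
          by_cases hpx' : z = px
          · rw [hpx']; exact hpxret
          · by_cases hpy' : z = py
            · exfalso; rw [hpy'] at hr; exact hiffpy (hpy' ▸ hzD) hr
            · exact (hiff z hzD hpy' hpx').1 hr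
        · rintro ⟨hzV, hr⟩
          have hzpy : z ≠ py := fun hc => hreticpy (hc ▸ hr)
          have hzD : z ∉ D := by
            intro hc
            rcases hDsub _ hc with h | h
            · exact hzpy h
            · exact hcase (h ▸ hc)
          refine ⟨(hVmem z).2 ⟨hzV, hzD⟩, ?_⟩
          by_cases hpx' : z = px
          · rw [hpx']; exact hiffpx hcase
          · exact (hiff z hzD hzpy hpx').2 hr
      constructor
      · have hm1 : (py,px) ∈ M.E.filter (fun e => M.IsRetic e.2) :=
          Finset.mem_filter.2 ⟨hpypx, hpxret⟩
        have hc1 := Finset.card_erase_of_mem hm1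
        have hp1 : 1 ≤ (M.E.filter (fun e => M.IsRetic e.2)).card :=
          Finset.card_pos.2 ⟨_, hm1⟩
        rw [eRet, eRet, hseteq]
        omega
      · rw [kRet, kRet, hkseteq]

end Network

namespace Network

set_option maxHeartbeats 1000000 in
lemma retcherry_step_dummy : True := trivial

variable {X : Type} {M : Network X}

set_option maxHeartbeats 1600000 in
lemma retcherry_step {x y : X} (hM : M.Nice) (h : M.IsRetCherry x y) :
    (M.reducePair (x,y)).Nice ∧ (M.reducePair (x,y)).taxa = M.taxa ∧
    (((M.reducePair (x,y)).eRet + 1 = M.eRet ∧ (M.reducePair (x,y)).kRet = M.kRet) ∨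
     ((M.reducePair (x,y)).eRet + 2 = M.eRet ∧ (M.reducePair (x,y)).kRet + 1 = M.kRet)) := by
  obtain ⟨r1, r2, r3, r4, r5, r6, r7, r8⟩ := hM
  obtain ⟨hx, hy, hxy, px, py, hpxe, hpye, hpxret, hpytree, hpypx⟩ := h
  set lx := M.label x with hlxdef
  set ly := M.label y with hlydef
  have hlxleaf : lx ∈ M.V ∧ M.IsLeafNode lx := r6 x hx
  have hlyleaf : ly ∈ M.V ∧ M.IsLeafNode ly := r6 y hy
  have hne : lx ≠ ly := fun hc => hxy (r5 (Finset.mem_coe.2 hx) (Finset.mem_coe.2 hy) hc)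
  have houtpx1 : M.outdeg px = 1 := hpxret.2
  have hinpx2 : 2 ≤ M.indeg px := hpxret.1
  have hinpy1 : M.indeg py = 1 := hpytree.1
  have houtpy2 : 2 ≤ M.outdeg py := hpytree.2
  have hinx : M.E.filter (fun e => e.2 = lx) = {(px, lx)} := in_edges_eq hlxleaf.2.1 hpxe
  have hiny : M.E.filter (fun e => e.2 = ly) = {(py, ly)} := in_edges_eq hlyleaf.2.1 hpye
  have hparx : M.theParent lx = px := theParent_spec hinx
  have hpary : M.theParent ly = py := theParent_spec hiny
  have houtpxfil : M.E.filter (fun e => e.1 = px) = {(px,lx)} := out_edges_eq houtpx1 hpxe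
  obtain ⟨gy, hingy⟩ := indeg_one_spec hinpy1
  have hgype : (gy, py) ∈ M.E := mem_of_in_edges_eq hingy
  have hpxpy : px ≠ py := by
    intro hc; rw [hc] at houtpx1; omega
  have hpxlx : px ≠ lx := (r8 _ _ hpxe).1
  have hpyly : py ≠ ly := (r8 _ _ hpye).1
  have hpylx : py ≠ lx := by
    intro hc; exact outdeg_zero_no_edge hlxleaf.2.2 px (hc ▸ hpypx)
  have hpxly : px ≠ ly := by
    intro hc; exact outdeg_zero_no_edge hlyleaf.2.2 lx (hc ▸ hpxe)
  have hgynpy : gy ≠ py := (r8 _ _ hgype).1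
  have hgypx : gy ≠ px := by
    intro hc; exact (r8 py px hpypx).2 (hc ▸ hgype)
  have hgylx : gy ≠ lx := no_out_edge hlxleaf.2.2 hgype
  have hgyly : gy ≠ ly := no_out_edge hlyleaf.2.2 hgype
  have hgyV : gy ∈ M.V := (r4 _ hgype).1
  have hpxV : px ∈ M.V := (r4 _ hpxe).1
  have hpyV : py ∈ M.V := (r4 _ hpye).1
  have hreticpy : ¬ M.IsRetic py := by rw [IsRetic]; omega
  have hreticlx : ¬ M.IsRetic lx := by rw [IsRetic, hlxleaf.2.2]; omega
  have hreticly : ¬ M.IsRetic ly := by rw [IsRetic, hlyleaf.2.2]; omega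
  -- unfold reducePair
  have hnc : ¬ M.IsCherry (x,y).1 (x,y).2 := by
    rintro ⟨_, _, _, q, hq1, hq2⟩
    have h1 : (q, lx) = (px, lx) := eq_of_in_edges hinx hq1 rfl
    have h2 : (q, ly) = (py, ly) := eq_of_in_edges hiny hq2 rfl
    exact hpxpy ((congrArg Prod.fst h1).symm.trans (congrArg Prod.fst h2))
  set M₁ := M.delEdge (py, px) with hM₁def
  have hrp : M.reducePair (x,y) = (M₁.suppress py).suppress px := by
    have h1 : M.theParent (M.label (x,y).2) = py := hpary
    have h2 : M.theParent (M.label (x,y).1) = px := hparx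
    have hrc : M.IsRetCherry (x,y).1 (x,y).2 :=
      ⟨hx, hy, hxy, px, py, hpxe, hpye, hpxret, hpytree, hpypx⟩
    unfold reducePair
    rw [if_neg hnc, if_pos hrc, h1, h2]
  have hE1 : M₁.E = M.E.erase (py, px) := rfl
  have hV1 : M₁.V = M.V := rfl
  have hroot1 : M₁.root = M.root := rfl
  have htaxa1 : M₁.taxa = M.taxa := rfl
  have hlabel1 : M₁.label = M.label := rfl
  have d1in : ∀ z, M₁.indeg z = if px = z then M.indeg z - 1 else M.indeg z :=
    fun z => delEdge_indeg (py,px) hpypx z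
  have d1out : ∀ z, M₁.outdeg z = if py = z then M.outdeg z - 1 else M.outdeg z :=
    fun z => delEdge_outdeg (py,px) hpypx z
  have hdm1 : ∀ z, z ≠ py → z ≠ px → M₁.indeg z = M.indeg z ∧ M₁.outdeg z = M.outdeg z := by
    intro z h1 h2
    exact ⟨by rw [d1in z, if_neg (fun hc => h2 hc.symm)],
      by rw [d1out z, if_neg (fun hc => h1 hc.symm)]⟩
  have hd1py : M₁.indeg py = 1 ∧ M₁.outdeg py = M.outdeg py - 1 :=
    ⟨by rw [d1in py, if_neg hpxpy]; exact hinpy1, by rw [d1out py, if_pos rfl]⟩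
  have hd1px : M₁.indeg px = M.indeg px - 1 ∧ M₁.outdeg px = M.outdeg px :=
    ⟨by rw [d1in px, if_pos rfl], by rw [d1out px, if_neg (fun hc => hpxpy hc.symm)]⟩
  have hmem1 : ∀ e : ℕ × ℕ, e ∈ M₁.E ↔ (e ≠ (py,px) ∧ e ∈ M.E) := by
    intro e; rw [hE1]; exact Finset.mem_erase
  have hfin1py : M₁.E.filter (fun e => e.2 = py) = {(gy,py)} := by
    rw [hE1, Finset.filter_erase, hingy, Finset.erase_eq_of_notMem]
    intro hc
    rw [Finset.mem_singleton] at hc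
    exact hpxpy (congrArg Prod.snd hc)
  have hfout1px : M₁.E.filter (fun e => e.1 = px) = {(px,lx)} := by
    rw [hE1, Finset.filter_erase, houtpxfil, Finset.erase_eq_of_notMem]
    intro hc
    rw [Finset.mem_singleton] at hc
    exact hpxpy ((congrArg Prod.fst hc).symm)
  have hfin1pxgen : ∀ e ∈ M₁.E, e.2 = px → e.1 ≠ py := by
    intro e he h2 hc
    have : e = (py, px) := Prod.ext hc h2
    exact ((hmem1 e).1 he).1 this
  rw [hrp]
  by_cases hY : M.outdeg py = 2
  · -- py is suppressed
    have houtpyfil : M.E.filter (fun e => e.1 = py) = {(py,px),(py,ly)} :=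
      out_edges_pair hY hpypx hpye hpxly
    have hfout1py : M₁.E.filter (fun e => e.1 = py) = {(py,ly)} := by
      rw [hE1, Finset.filter_erase, houtpyfil]
      refine Finset.erase_insert ?_
      intro hc
      rw [Finset.mem_singleton] at hc
      exact hpxly (congrArg Prod.snd hc)
    have hnew2 : (gy, ly) ∉ M₁.E := by
      intro hc
      have hcM : (gy,ly) ∈ M.E := ((hmem1 _).1 hc).2
      exact hgynpy (congrArg Prod.fst (eq_of_in_edges hiny hcM rfl))
    obtain ⟨sE2, sV2, sroot2, staxa2, slabel2, sdeg2⟩ :=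
      suppress_spec (M := M₁) hfin1py hfout1py hgynpy hpyly hgyly hnew2
    have hmem2 : ∀ e : ℕ × ℕ, e ∈ (M₁.suppress py).E ↔
        ((e ∈ M.E ∧ e ≠ (py,px) ∧ e.1 ≠ py ∧ e.2 ≠ py) ∨ e = (gy,ly)) := by
      intro e
      rw [sE2, Finset.mem_union, Finset.mem_filter, Finset.mem_singleton]
      constructor
      · rintro (⟨he1, hp1, hp2⟩ | hh)
        · obtain ⟨hq1, hq2⟩ := (hmem1 e).1 he1
          exact Or.inl ⟨hq2, hq1, hp1, hp2⟩
        · exact Or.inr hh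
      · rintro (⟨he, hq1, h3, h4⟩ | hh)
        · exact Or.inl ⟨(hmem1 e).2 ⟨hq1, he⟩, h3, h4⟩
        · exact Or.inr hh
    have hdm2 : ∀ z, z ≠ py → z ≠ px →
        (M₁.suppress py).indeg z = M.indeg z ∧ (M₁.suppress py).outdeg z = M.outdeg z := by
      intro z h1 h2
      obtain ⟨d1, d2⟩ := sdeg2 z h1
      obtain ⟨e1, e2⟩ := hdm1 z h1 h2
      exact ⟨d1.trans e1, d2.trans e2⟩
    have hd2px : (M₁.suppress py).indeg px = M.indeg px - 1 ∧
        (M₁.suppress py).outdeg px = M.outdeg px := by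
      obtain ⟨d1, d2⟩ := sdeg2 px (fun hc => hpxpy hc)
      exact ⟨d1.trans hd1px.1, d2.trans hd1px.2⟩
    by_cases hX : M.indeg px = 2
    · -- px is suppressed too
      obtain ⟨p', hp'ne, hp'e, hinfilpx⟩ := in_edges_pair hX hpypx
      have hp'px : p' ≠ px := (r8 _ _ hp'e).1
      have hp'lx : p' ≠ lx := no_out_edge hlxleaf.2.2 hp'e
      have hp'ly : p' ≠ ly := no_out_edge hlyleaf.2.2 hp'e
      have hp'V : p' ∈ M.V := (r4 _ hp'e).1
      have hp'npy : p' ≠ py := fun hc => hp'ne hc.symm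
      have hfin2px : (M₁.suppress py).E.filter (fun e => e.2 = px) = {(p',px)} := by
        ext e
        simp only [Finset.mem_filter, Finset.mem_singleton]
        constructor
        · rintro ⟨he, h3⟩
          rcases (hmem2 e).1 he with ⟨heM, hne1, _, _⟩ | heq
          · have : e ∈ M.E.filter (fun e => e.2 = px) := Finset.mem_filter.2 ⟨heM, h3⟩
            rw [hinfilpx] at this
            simp only [Finset.mem_insert, Finset.mem_singleton] at this
            rcases this with h' | h'
            · exact absurd h' hne1
            · exact h'
          · rw [heq] at h3
            exact absurd h3 hpxly.symm
        · rintro rfl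
          refine ⟨(hmem2 _).2 (Or.inl ⟨hp'e, ?_, hp'npy, fun hc => hpxpy hc⟩), rfl⟩
          intro hc
          exact hp'npy (congrArg Prod.fst hc)
      have hfout2px : (M₁.suppress py).E.filter (fun e => e.1 = px) = {(px,lx)} := by
        ext e
        simp only [Finset.mem_filter, Finset.mem_singleton]
        constructor
        · rintro ⟨he, h3⟩
          rcases (hmem2 e).1 he with ⟨heM, _, _, _⟩ | heq
          · exact eq_of_out_edges houtpxfil heM h3
          · rw [heq] at h3
            exact absurd h3 hgypx
        · rintro rfl
          refine ⟨(hmem2 _).2 (Or.inl ⟨hpxe, ?_, fun hc => hpxpy hc, hpylx.symm⟩), rfl⟩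
          intro hc
          exact hpxpy (congrArg Prod.fst hc)
      have hnew3 : (p', lx) ∉ (M₁.suppress py).E := by
        intro hc
        rcases (hmem2 _).1 hc with ⟨hcM, _, _, _⟩ | heq
        · exact hp'px (congrArg Prod.fst (eq_of_in_edges hinx hcM rfl))
        · exact hne (congrArg Prod.snd heq)
      obtain ⟨sE3, sV3, sroot3, staxa3, slabel3, sdeg3⟩ :=
        suppress_spec (M := M₁.suppress py) hfin2px hfout2px hp'px
          (fun hc => hpxlx hc) hp'lx hnew3
      refine And.imp_right (fun hC => ⟨staxa3.trans (staxa2.trans htaxa1), hC⟩)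
        (retfinish (M := M) (N' := ((M₁.suppress py).suppress px))
        (W := {(gy,ly),(p',lx)}) (D := {py,px})
        ⟨r1, r2, r3, r4, r5, r6, r7, r8⟩ hlxleaf hlyleaf hpxe hpypx hpxret hpytree
        ?_ ?_ ?_ ?_ ?_ ?_ ?_ ?_ ?_ ?_ ?_ ?_ ?_)
      · intro z hz
        simp only [Finset.mem_insert, Finset.mem_singleton] at hz
        exact hz
      · exact iff_of_true (by simp) hY
      · exact iff_of_true (by simp) hX
      · rw [sV3, sV2, hV1]
        ext z
        simp only [Finset.mem_erase, Finset.mem_sdiff, Finset.mem_insert,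
          Finset.mem_singleton]
        tauto
      · intro e he
        rw [sE3, Finset.mem_union, Finset.mem_filter, Finset.mem_singleton] at he
        rcases he with ⟨he2, hq1, hq2⟩ | heq
        · rcases (hmem2 e).1 he2 with ⟨heM, hne1, h3, h4⟩ | heq2
          · refine Or.inl ⟨heM, hne1, ?_, ?_⟩ <;>
              simp only [Finset.mem_insert, Finset.mem_singleton] <;> tauto
          · exact Or.inr (by rw [heq2]; simp)
        · exact Or.inr (by rw [heq]; simp)
      · -- H2b
        intro e heM hret hne1 hpxcond
        have h2px : e.2 ≠ px := hpxcond (by simp)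
        have h2py : e.2 ≠ py := fun hc => hreticpy (hc ▸ hret)
        have h1py : e.1 ≠ py := by
          intro hc
          have : e ∈ M.E.filter (fun e => e.1 = py) := Finset.mem_filter.2 ⟨heM, hc⟩
          rw [houtpyfil] at this
          simp only [Finset.mem_insert, Finset.mem_singleton] at this
          rcases this with h' | h'
          · exact hne1 h'
          · have h2' : e.2 = ly := congrArg Prod.snd h'
            rw [h2'] at hret
            exact hreticly hret
        have h1px : e.1 ≠ px := by
          intro hc
          have := eq_of_out_edges houtpxfil heM hc
          have h2' : e.2 = lx := congrArg Prod.snd this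
          rw [h2'] at hret
          exact hreticlx hret
        rw [sE3, Finset.mem_union, Finset.mem_filter]
        exact Or.inl ⟨(hmem2 e).2 (Or.inl ⟨heM, hne1, h1py, h2py⟩), h1px, h2px⟩
      · -- HW
        intro e he
        simp only [Finset.mem_insert, Finset.mem_singleton] at he
        rcases he with rfl | rfl
        · exact ⟨hgyV, by simp [hgynpy, hgypx], Or.inr rfl, hgylx, hgyly⟩
        · exact ⟨hp'V, by simp [hp'npy, hp'px], Or.inl rfl, hp'lx, hp'ly⟩
      · -- Hdeg
        intro z hzD h1 h2
        obtain ⟨d1, d2⟩ := sdeg3 z h2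
        obtain ⟨e1, e2⟩ := hdm2 z h1 h2
        exact ⟨d1.trans e1, d2.trans e2⟩
      · intro hc
        exact absurd (by simp : py ∈ ({py,px} : Finset ℕ)) hc
      · intro hc
        exact absurd (by simp : px ∈ ({py,px} : Finset ℕ)) hc
      · exact staxa3.trans (staxa2.trans htaxa1)
      · exact slabel3.trans (slabel2.trans hlabel1)
      · exact sroot3.trans (sroot2.trans hroot1)
    · -- px kept
      have hsup3 : (M₁.suppress py).suppress px = M₁.suppress py := by
        apply suppress_of_not
        rintro ⟨hc, _⟩
        rw [hd2px.1] at hc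
        omega
      rw [hsup3]
      refine And.imp_right (fun hC => ⟨staxa2.trans htaxa1, hC⟩)
        (retfinish (M := M) (N' := M₁.suppress py)
        (W := {(gy,ly)}) (D := {py})
        ⟨r1, r2, r3, r4, r5, r6, r7, r8⟩ hlxleaf hlyleaf hpxe hpypx hpxret hpytree
        ?_ ?_ ?_ ?_ ?_ ?_ ?_ ?_ ?_ ?_ ?_ ?_ ?_)
      · intro z hz
        simp only [Finset.mem_singleton] at hz
        exact Or.inl hz
      · exact iff_of_true (by simp) hY
      · simp only [Finset.mem_singleton]
        exact iff_of_false hpxpy hX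
      · rw [sV2, hV1]
        ext z
        simp only [Finset.mem_erase, Finset.mem_sdiff, Finset.mem_singleton]
        tauto
      · intro e he
        rcases (hmem2 e).1 he with ⟨heM, hne1, h3, h4⟩ | heq
        · refine Or.inl ⟨heM, hne1, ?_, ?_⟩ <;> simp only [Finset.mem_singleton] <;> tauto
        · exact Or.inr (by rw [heq]; simp)
      · intro e heM hret hne1 _
        have h2py : e.2 ≠ py := fun hc => hreticpy (hc ▸ hret)
        have h1py : e.1 ≠ py := by
          intro hc
          have : e ∈ M.E.filter (fun e => e.1 = py) := Finset.mem_filter.2 ⟨heM, hc⟩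
          rw [houtpyfil] at this
          simp only [Finset.mem_insert, Finset.mem_singleton] at this
          rcases this with h' | h'
          · exact hne1 h'
          · have h2' : e.2 = ly := congrArg Prod.snd h'
            rw [h2'] at hret
            exact hreticly hret
        exact (hmem2 e).2 (Or.inl ⟨heM, hne1, h1py, h2py⟩)
      · intro e he
        simp only [Finset.mem_singleton] at he
        subst he
        exact ⟨hgyV, by simp [hgynpy], Or.inr rfl, hgylx, hgyly⟩
      · intro z hzD h1 h2
        exact hdm2 z h1 h2
      · intro hc
        exact absurd (by simp : py ∈ ({py} : Finset ℕ)) hc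
      · intro _
        exact ⟨hd2px.1, hd2px.2.trans houtpx1⟩
      · exact staxa2.trans htaxa1
      · exact slabel2.trans hlabel1
      · exact sroot2.trans hroot1
  · -- py kept
    have hsup2 : M₁.suppress py = M₁ := by
      apply suppress_of_not
      rintro ⟨_, hc⟩
      rw [hd1py.2] at hc
      omega
    rw [hsup2]
    by_cases hX : M.indeg px = 2
    · -- px suppressed
      obtain ⟨p', hp'ne, hp'e, hinfilpx⟩ := in_edges_pair hX hpypx
      have hp'px : p' ≠ px := (r8 _ _ hp'e).1
      have hp'lx : p' ≠ lx := no_out_edge hlxleaf.2.2 hp'e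
      have hp'ly : p' ≠ ly := no_out_edge hlyleaf.2.2 hp'e
      have hp'V : p' ∈ M.V := (r4 _ hp'e).1
      have hp'npy : p' ≠ py := fun hc => hp'ne hc.symm
      have hfin1px : M₁.E.filter (fun e => e.2 = px) = {(p',px)} := by
        rw [hE1, Finset.filter_erase, hinfilpx]
        refine Finset.erase_insert ?_
        intro hc
        rw [Finset.mem_singleton] at hc
        exact hp'npy (congrArg Prod.fst hc).symm
      have hnew3 : (p', lx) ∉ M₁.E := by
        intro hc
        have hcM : (p',lx) ∈ M.E := ((hmem1 _).1 hc).2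
        exact hp'px (congrArg Prod.fst (eq_of_in_edges hinx hcM rfl))
      obtain ⟨sE3, sV3, sroot3, staxa3, slabel3, sdeg3⟩ :=
        suppress_spec (M := M₁) hfin1px hfout1px hp'px (fun hc => hpxlx hc) hp'lx hnew3
      refine And.imp_right (fun hC => ⟨staxa3.trans htaxa1, hC⟩)
        (retfinish (M := M) (N' := M₁.suppress px)
        (W := {(p',lx)}) (D := {px})
        ⟨r1, r2, r3, r4, r5, r6, r7, r8⟩ hlxleaf hlyleaf hpxe hpypx hpxret hpytree
        ?_ ?_ ?_ ?_ ?_ ?_ ?_ ?_ ?_ ?_ ?_ ?_ ?_)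
      · intro z hz
        simp only [Finset.mem_singleton] at hz
        exact Or.inr hz
      · simp only [Finset.mem_singleton]
        exact iff_of_false (fun hc => hpxpy hc.symm) hY
      · exact iff_of_true (by simp) hX
      · rw [sV3, hV1]
        ext z
        simp only [Finset.mem_erase, Finset.mem_sdiff, Finset.mem_singleton]
        tauto
      · intro e he
        rw [sE3, Finset.mem_union, Finset.mem_filter, Finset.mem_singleton] at he
        rcases he with ⟨he2, hq1, hq2⟩ | heq
        · obtain ⟨hne1, heM⟩ := (hmem1 e).1 he2
          refine Or.inl ⟨heM, hne1, ?_, ?_⟩ <;> simp only [Finset.mem_singleton] <;> tauto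
        · exact Or.inr (by rw [heq]; simp)
      · intro e heM hret hne1 hpxcond
        have h2px : e.2 ≠ px := hpxcond (by simp)
        have h1px : e.1 ≠ px := by
          intro hc
          have := eq_of_out_edges houtpxfil heM hc
          have h2' : e.2 = lx := congrArg Prod.snd this
          rw [h2'] at hret
          exact hreticlx hret
        rw [sE3, Finset.mem_union, Finset.mem_filter]
        exact Or.inl ⟨(hmem1 e).2 ⟨hne1, heM⟩, h1px, h2px⟩
      · intro e he
        simp only [Finset.mem_singleton] at he
        subst he
        exact ⟨hp'V, by simp [hp'px], Or.inl rfl, hp'lx, hp'ly⟩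
      · intro z hzD h1 h2
        obtain ⟨d1, d2⟩ := sdeg3 z h2
        obtain ⟨e1, e2⟩ := hdm1 z h1 h2
        exact ⟨d1.trans e1, d2.trans e2⟩
      · intro _
        obtain ⟨d1, d2⟩ := sdeg3 py (fun hc => hpxpy hc.symm)
        exact ⟨d1.trans hd1py.1, d2.trans hd1py.2⟩
      · intro hc
        exact absurd (by simp : px ∈ ({px} : Finset ℕ)) hc
      · exact staxa3.trans htaxa1
      · exact slabel3.trans hlabel1
      · exact sroot3.trans hroot1
    · -- nothing suppressed
      have hsup3 : M₁.suppress px = M₁ := by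
        apply suppress_of_not
        rintro ⟨hc, _⟩
        rw [hd1px.1] at hc
        omega
      rw [hsup3]
      refine And.imp_right (fun hC => ⟨htaxa1, hC⟩)
        (retfinish (M := M) (N' := M₁)
        (W := (∅ : Finset (ℕ × ℕ))) (D := (∅ : Finset ℕ))
        ⟨r1, r2, r3, r4, r5, r6, r7, r8⟩ hlxleaf hlyleaf hpxe hpypx hpxret hpytree
        ?_ ?_ ?_ ?_ ?_ ?_ ?_ ?_ ?_ ?_ ?_ ?_ ?_)
      · intro z hz
        exact absurd hz (Finset.notMem_empty z)
      · exact iff_of_false (Finset.notMem_empty py) hY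
      · exact iff_of_false (Finset.notMem_empty px) hX
      · rw [hV1, Finset.sdiff_empty]
      · intro e he
        obtain ⟨hne1, heM⟩ := (hmem1 e).1 he
        exact Or.inl ⟨heM, hne1, Finset.notMem_empty _, Finset.notMem_empty _⟩
      · intro e heM _ hne1 _
        exact (hmem1 e).2 ⟨hne1, heM⟩
      · intro e he
        exact absurd he (Finset.notMem_empty e)
      · intro z _ h1 h2
        exact hdm1 z h1 h2
      · intro _
        exact hd1py
      · intro _
        exact ⟨hd1px.1, hd1px.2.trans houtpx1⟩
      · exact htaxa1
      · exact hlabel1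
      · exact hroot1

end Network

namespace Network

variable {X : Type} {M : Network X}

lemma reducePair_id {c : X × X} (h1 : ¬ M.IsCherry c.1 c.2) (h2 : ¬ M.IsRetCherry c.1 c.2) :
    M.reducePair c = M := by
  unfold reducePair
  rw [if_neg h1, if_neg h2]

lemma step_main (hM : M.Nice) (c : X × X) :
    M.reducePair c = M ∨
    ((M.reducePair c).Nice ∧
     (M.reducePair c).taxa.card + ((M.reducePair c).eRet + M.kRet) + 1
       = M.taxa.card + (M.eRet + (M.reducePair c).kRet)) := by
  by_cases h1 : M.IsCherry c.1 c.2
  · right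
    have hc := cherry_step hM (x := c.1) (y := c.2) h1
    rw [Prod.mk.eta] at hc
    obtain ⟨hN, ht, he, hk⟩ := hc
    refine ⟨hN, ?_⟩
    have hx1 : c.1 ∈ M.taxa := h1.1
    have h1le : 1 ≤ M.taxa.card := Finset.card_pos.2 ⟨c.1, hx1⟩
    rw [ht, he, hk, Finset.card_erase_of_mem hx1]
    omega
  · by_cases h2 : M.IsRetCherry c.1 c.2
    · right
      have hc := retcherry_step hM (x := c.1) (y := c.2) h2
      rw [Prod.mk.eta] at hc
      obtain ⟨hN, ht, hca⟩ := hc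
      refine ⟨hN, ?_⟩
      rw [ht]
      rcases hca with ⟨he, hk⟩ | ⟨he, hk⟩ <;> omega
    · exact Or.inl (reducePair_id h1 h2)

lemma nice_reducePair (hM : M.Nice) (c : X × X) : (M.reducePair c).Nice := by
  rcases step_main hM c with h | h
  · rw [h]; exact hM
  · exact h.1

lemma reduceSeq_cons (c : X × X) (S : List (X × X)) :
    M.reduceSeq (c :: S) = (M.reducePair c).reduceSeq S := rfl

lemma reduceSeq_append (S T : List (X × X)) :
    M.reduceSeq (S ++ T) = (M.reduceSeq S).reduceSeq T := by
  rw [reduceSeq, reduceSeq, reduceSeq, List.foldl_append]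

lemma nice_reduceSeq (S : List (X × X)) : ∀ {M : Network X}, M.Nice → (M.reduceSeq S).Nice := by
  induction S with
  | nil => intro M hM; exact hM
  | cons c S ih =>
    intro M hM
    rw [reduceSeq_cons]
    exact ih (nice_reducePair hM c)

lemma final_counts (hM : M.Nice) (h : M.IsSingleLeaf) :
    M.taxa.card = 1 ∧ M.eRet = 0 ∧ M.kRet = 0 ∧ ∃ x₀, M.taxa = {x₀} := by
  obtain ⟨x₀, hx₀, hV, hE, hroot_ne⟩ := h
  obtain ⟨m1, m2, m3, m4, m5, m6, m7, m8⟩ := hM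
  have htax : M.taxa = {x₀} := by
    apply Finset.eq_singleton_iff_unique_mem.2
    refine ⟨hx₀, ?_⟩
    intro z hz
    have hl := m6 z hz
    have hlV := hl.1
    rw [hV] at hlV
    simp only [Finset.mem_insert, Finset.mem_singleton] at hlV
    rcases hlV with hr | hr
    · exfalso
      have hind := hl.2.1
      rw [hr, m2] at hind
      omega
    · exact m5 (Finset.mem_coe.2 hz) (Finset.mem_coe.2 hx₀) hr
  refine ⟨by rw [htax]; rfl, ?_, ?_, x₀, htax⟩
  · rw [eRet, Finset.card_eq_zero, Finset.filter_eq_empty_iff]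
    intro e he hr
    rw [hE, Finset.mem_singleton] at he
    have h2 : e.2 = M.label x₀ := congrArg Prod.snd he
    rw [h2, IsRetic, (m6 x₀ hx₀).2.2] at hr
    omega
  · rw [kRet, Finset.card_eq_zero, Finset.filter_eq_empty_iff]
    intro v hv hr
    rw [hV] at hv
    simp only [Finset.mem_insert, Finset.mem_singleton] at hv
    rcases hv with rfl | rfl
    · rw [IsRetic, m2] at hr
      omega
    · rw [IsRetic, (m6 x₀ hx₀).2.2] at hr
      omega

lemma seqA : ∀ (S : List (X × X)) (M : Network X), M.Nice → Reduces S M →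
    ∃ T : List (X × X), Reduces T M ∧ T.length ≤ S.length ∧
      M.taxa.card + M.eRet = M.kRet + T.length + 1 := by
  intro S
  induction S with
  | nil =>
    intro M hM hred
    obtain ⟨h1, h2, h3, _⟩ := final_counts hM hred
    exact ⟨[], hred, le_refl _, by simp only [List.length_nil]; omega⟩
  | cons c S ih =>
    intro M hM hred
    have hred' : Reduces S (M.reducePair c) := hred
    rcases step_main hM c with hid | ⟨hN, heq⟩
    · have hred'' : Reduces S M := by
        rw [Reduces, ← hid]
        exact hred'
      obtain ⟨T, h1, h2, h4⟩ := ih M hM hred''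
      refine ⟨T, h1, ?_, h4⟩
      simp only [List.length_cons]
      omega
    · obtain ⟨T, h1, h2, h4⟩ := ih (M.reducePair c) hN hred'
      refine ⟨c :: T, h1, ?_, ?_⟩
      · simp only [List.length_cons]
        omega
      · simp only [List.length_cons]
        omega

end Network

namespace Network

variable {X : Type}

lemma take_succ_step (N : Network X) (S : List (X × X)) (j : ℕ) (hj : j < S.length) :
    N.reduceSeq (S.take (j+1)) = (N.reduceSeq (S.take j)).reducePair (S.get ⟨j, hj⟩) := by
  rw [← List.take_concat_get hj, List.concat_eq_append, reduceSeq_append]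
  rfl

end Network

theorem minimal_length_reducing_sequence_is_CPS_aux (X : Type) (N : Network X)
    (hN : N.IsPhylo) (S : List (X × X)) (hred : Reduces S N)
    (hmin : ∀ T : List (X × X), Reduces T N → S.length ≤ T.length) :
    IsCPS S ∧ S.length + 1 = N.taxa.card + N.reticulationNumber := by
  have hNice := nice_of_phylo hN
  obtain ⟨T, hTred, hTle, hform⟩ := seqA S N hNice hred
  have hSlen : S.length = T.length := le_antisymm (hmin T hTred) hTle
  have hform' : N.taxa.card + N.eRet = N.kRet + S.length + 1 := by rw [hSlen]; exact hform
  have h2k := two_kRet_le_eRet hNice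
  have hniceseq : ∀ L : List (X × X), (N.reduceSeq L).Nice := fun L => nice_reduceSeq L hNice
  have heff : ∀ (i : ℕ) (hi : i < S.length),
      (N.reduceSeq (S.take i)).IsCherry (S.get ⟨i,hi⟩).1 (S.get ⟨i,hi⟩).2 ∨
      (N.reduceSeq (S.take i)).IsRetCherry (S.get ⟨i,hi⟩).1 (S.get ⟨i,hi⟩).2 := by
    intro i hi
    by_contra hcon
    rw [not_or] at hcon
    obtain ⟨hnc, hnrc⟩ := hcon
    have hid := reducePair_id (M := N.reduceSeq (S.take i)) hnc hnrc
    have hred2 : Reduces (S.take i ++ S.drop (i+1)) N := by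
      rw [Reduces, reduceSeq_append]
      have hS : N.reduceSeq S = (N.reduceSeq (S.take i)).reduceSeq (S.drop (i+1)) := by
        conv_lhs => rw [← List.take_append_drop (i+1) S]
        rw [reduceSeq_append, take_succ_step N S i hi, hid]
      rw [← hS]
      exact hred
    have hlen := hmin _ hred2
    rw [List.length_append, List.length_take, List.length_drop] at hlen
    omega
  have hfinal := final_counts (hniceseq S) hred
  obtain ⟨_, _, _, x₀, hftax⟩ := hfinal
  have hlast : 0 < S.length → ∃ q, S.getLast? = some q ∧ q.2 = x₀ := by
    intro h0
    have hL : S.length - 1 < S.length := by omega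
    have hgetlast : S.getLast? = some (S.get ⟨S.length - 1, hL⟩) := by
      rw [List.getLast?_eq_getElem?, List.getElem?_eq_getElem hL]
      rfl
    have htakeS : N.reduceSeq S =
        (N.reduceSeq (S.take (S.length - 1))).reducePair (S.get ⟨S.length - 1, hL⟩) := by
      conv_lhs => rw [show S = S.take (S.length - 1 + 1) from by
        rw [show S.length - 1 + 1 = S.length from by omega, List.take_length]]
      exact take_succ_step N S (S.length - 1) hL
    refine ⟨S.get ⟨S.length - 1, hL⟩, hgetlast, ?_⟩
    rcases heff (S.length - 1) hL with hch | hrc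
    · have hcs := cherry_step (hniceseq (S.take (S.length - 1))) hch
      rw [Prod.mk.eta] at hcs
      have htx : (N.reduceSeq S).taxa =
          (N.reduceSeq (S.take (S.length - 1))).taxa.erase (S.get ⟨S.length - 1, hL⟩).1 := by
        rw [htakeS]; exact hcs.2.1
      have hq2mem : (S.get ⟨S.length - 1, hL⟩).2 ∈ (N.reduceSeq S).taxa := by
        rw [htx]
        exact Finset.mem_erase.2 ⟨fun hc => hch.2.2.1 hc.symm, hch.2.1⟩
      rw [hftax, Finset.mem_singleton] at hq2mem
      exact hq2mem
    · exfalso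
      have hcs := retcherry_step (hniceseq (S.take (S.length - 1))) hrc
      rw [Prod.mk.eta] at hcs
      have htx : (N.reduceSeq S).taxa = (N.reduceSeq (S.take (S.length - 1))).taxa := by
        rw [htakeS]; exact hcs.2.1
      have h1 : (S.get ⟨S.length - 1, hL⟩).1 ∈ (N.reduceSeq S).taxa := by
        rw [htx]; exact hrc.1
      have h2 : (S.get ⟨S.length - 1, hL⟩).2 ∈ (N.reduceSeq S).taxa := by
        rw [htx]; exact hrc.2.1
      rw [hftax, Finset.mem_singleton] at h1 h2
      exact hrc.2.2.1 (h1.trans h2.symm)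
  refine ⟨⟨?_, ?_⟩, ?_⟩
  · intro p hp
    rw [List.mem_iff_get] at hp
    obtain ⟨⟨i, hi⟩, rfl⟩ := hp
    rcases heff i hi with hch | hrc
    · exact hch.2.2.1
    · exact hrc.2.2.1
  · intro i hi
    have hstart : (S.get ⟨i, hi⟩).2 ∈ (N.reduceSeq (S.take (i+1))).taxa := by
      rw [take_succ_step N S i hi]
      rcases heff i hi with hch | hrc
      · have hcs := cherry_step (hniceseq (S.take i)) hch
        rw [Prod.mk.eta] at hcs
        rw [hcs.2.1]
        exact Finset.mem_erase.2 ⟨fun hc => hch.2.2.1 hc.symm, hch.2.1⟩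
      · have hcs := retcherry_step (hniceseq (S.take i)) hrc
        rw [Prod.mk.eta] at hcs
        rw [hcs.2.1]
        exact hrc.2.1
    have key : ∀ n j, j ≤ S.length → S.length - j = n → i + 1 ≤ j →
        (S.get ⟨i, hi⟩).2 ∈ (N.reduceSeq (S.take j)).taxa →
        ((S.get ⟨i, hi⟩).2 ∈ (S.drop (i + 1)).map Prod.fst) ∨
        (S.get ⟨i, hi⟩).2 ∈ (N.reduceSeq S).taxa := by
      intro n
      induction n with
      | zero =>
        intro j h1 h2 _ hp
        right
        have hj : j = S.length := by omega
        rw [hj, List.take_length] at hp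
        exact hp
      | succ n ihn =>
        intro j h1 h2 h3 hp
        have hj : j < S.length := by omega
        rcases heff j hj with hch | hrc
        · by_cases hc2 : (S.get ⟨j,hj⟩).1 = (S.get ⟨i, hi⟩).2
          · left
            rw [List.mem_map]
            refine ⟨S.get ⟨j,hj⟩, ?_, hc2⟩
            have h4 : j - (i+1) < (S.drop (i+1)).length := by
              rw [List.length_drop]; omega
            have h5 : (S.drop (i+1)).get ⟨j - (i+1), h4⟩ = S.get ⟨j, hj⟩ := by
              simp only [List.get_eq_getElem, List.getElem_drop]
              congr 1
              omega
            rw [← h5]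
            exact List.get_mem _ _
          · apply ihn (j+1) (by omega) (by omega) (by omega)
            rw [take_succ_step N S j hj]
            have hcs := cherry_step (hniceseq (S.take j)) hch
            rw [Prod.mk.eta] at hcs
            rw [hcs.2.1]
            exact Finset.mem_erase.2 ⟨fun hc => hc2 hc.symm, hp⟩
        · apply ihn (j+1) (by omega) (by omega) (by omega)
          rw [take_succ_step N S j hj]
          have hcs := retcherry_step (hniceseq (S.take j)) hrc
          rw [Prod.mk.eta] at hcs
          rw [hcs.2.1]
          exact hp
    rcases key (S.length - (i+1)) (i+1) (by omega) rfl (le_refl _) hstart with hmap | hfin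
    · exact Or.inl hmap
    · obtain ⟨q, hq1, hq2⟩ := hlast (by omega)
      refine Or.inr ⟨q, hq1, ?_⟩
      rw [hftax, Finset.mem_singleton] at hfin
      rw [hfin, hq2]
  · rw [reticulationNumber_eq]
    omega


/-- A minimal-length sequence of ordered pairs of leaves that
reduces a phylogenetic network `N` to a single-leaf network must be a
cherry-picking sequence, and its length equals `n + r - 1` where `n` is the
number of leaves and `r` the reticulation number of `N`. -/
theorem minimal_length_reducing_sequence_is_CPS (X : Type) (N : Network X)
    (hN : N.IsPhylo) (S : List (X × X)) (hred : Reduces S N)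
    (hmin : ∀ T : List (X × X), Reduces T N → S.length ≤ T.length) :
    IsCPS S ∧ S.length + 1 = N.taxa.card + N.reticulationNumber :=
  minimal_length_reducing_sequence_is_CPS_aux X N hN S hred hmin
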